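/- arXiv:1608.08529 — 4 statements merged into one kernel-verified Lean document; each statement's English description precedes it below -/
import Mathlib

section
/- Let n ≥ 2 and let f be an (n-1)-times differentiable function on [a,b] with f⁽ⁱ⁾ ≥ 0 for i = 0,…,n-2. Let g, h both belong to D₊[a,b] (or both to D₋[a,b]) with g, h ≥ 0, g increasing, and h and g·h decreasing on [a,b]. Suppose f⁽ⁿ⁻¹⁾ ≥ (n!/(n-1))·f·g^{n-l}·hⁿ on [a,b] for some l ∈ {1,…,n}. Then (b-a)·f(a)ⁿ·g(a)^{l} + (∫_a^b f·g·h)ⁿ ≤ ∫_a^b fⁿ·g^{l}. -/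
/-- `D₊[a,b]`: continuous functions on `[a,b]` having a right-derivative at every
point of `(a,b)`. -/
def DPlus (a b : ℝ) (h : ℝ → ℝ) : Prop :=
  ContinuousOn h (Set.Icc a b) ∧ ∀ x ∈ Set.Ioo a b, ∃ L : ℝ, HasDerivWithinAt h L (Set.Ioi x) x

/-- `D₋[a,b]`: continuous functions on `[a,b]` having a left-derivative at every
point of `(a,b)`. -/
def DMinus (a b : ℝ) (h : ℝ → ℝ) : Prop :=
  ContinuousOn h (Set.Icc a b) ∧ ∀ x ∈ Set.Ioo a b, ∃ L : ℝ, HasDerivWithinAt h L (Set.Iio x) x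


open Set Filter Topology

/-- One-sided (right) derivative of a function monotone on `[a,b]` is nonnegative. -/
lemma slope_nonneg_right {a b x L : ℝ} {φ : ℝ → ℝ} (hx : x ∈ Set.Ioo a b)
    (hφ : MonotoneOn φ (Set.Icc a b)) (hL : HasDerivWithinAt φ L (Set.Ioi x) x) : 0 ≤ L := by
  have h2 : Tendsto (slope φ x) (𝓝[Set.Ioi x \ {x}] x) (𝓝 L) :=
    hasDerivWithinAt_iff_tendsto_slope.mp hL
  have hss : Set.Ioi x \ {x} = Set.Ioi x := by
    ext t; simp (config := {contextual := true}) [lt_irrefl, ne_of_gt]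
  rw [hss] at h2
  have hev : ∀ᶠ t in 𝓝[>] x, 0 ≤ slope φ x t := by
    filter_upwards [Ioo_mem_nhdsGT hx.2] with t ht
    rw [slope_def_field]
    have h1 : φ x ≤ φ t := hφ ⟨hx.1.le, hx.2.le⟩ ⟨(hx.1.trans ht.1).le, ht.2.le⟩ ht.1.le
    have := ht.1
    have h4 : (0:ℝ) < t - x := by linarith
    exact div_nonneg (by linarith) h4.le
  exact ge_of_tendsto h2 hev

/-- One-sided (left) derivative of a function monotone on `[a,b]` is nonnegative. -/
lemma slope_nonneg_left {a b x L : ℝ} {φ : ℝ → ℝ} (hx : x ∈ Set.Ioo a b)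
    (hφ : MonotoneOn φ (Set.Icc a b)) (hL : HasDerivWithinAt φ L (Set.Iio x) x) : 0 ≤ L := by
  have h2 : Tendsto (slope φ x) (𝓝[Set.Iio x \ {x}] x) (𝓝 L) :=
    hasDerivWithinAt_iff_tendsto_slope.mp hL
  have hss : Set.Iio x \ {x} = Set.Iio x := by
    ext t; simp (config := {contextual := true}) [lt_irrefl, ne_of_gt]
  rw [hss] at h2
  have hev : ∀ᶠ t in 𝓝[<] x, 0 ≤ slope φ x t := by
    filter_upwards [Ioo_mem_nhdsLT hx.1] with t ht
    rw [slope_def_field]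
    have h1 : φ t ≤ φ x := hφ ⟨ht.1.le, (ht.2.trans hx.2).le⟩ ⟨hx.1.le, hx.2.le⟩ ht.2.le
    have h3 : t - x < 0 := by linarith [ht.2]
    exact div_nonneg_of_nonpos (by linarith) h3.le
  exact ge_of_tendsto h2 hev

/-- A continuous function on `[a,b]` with nonnegative right derivatives on `(a,b)`
is monotone on `[a,b]`. -/
lemma mono_of_deriv_right {a b : ℝ} {V : ℝ → ℝ} (hV : ContinuousOn V (Set.Icc a b))
    (hd : ∀ x ∈ Set.Ioo a b, ∃ L, 0 ≤ L ∧ HasDerivWithinAt V L (Set.Ioi x) x) :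
    MonotoneOn V (Set.Icc a b) := by
  intro x hx y hy hxy
  rcases eq_or_lt_of_le hxy with rfl | hxy
  · exact le_rfl
  classical
  set D : ℝ → ℝ := fun z => if hz : z ∈ Set.Ioo a b then (hd z hz).choose else 0 with hDdef
  have key : ∀ c ∈ Set.Ioo x y, V c ≤ V y := by
    intro c hc
    have hprop : ∀ z ∈ Set.Ico c y, HasDerivWithinAt V (D z) (Set.Ici z) z ∧ 0 ≤ D z := by
      intro z hz
      have hz' : z ∈ Set.Ioo a b :=
        ⟨lt_of_le_of_lt hx.1 (lt_of_lt_of_le hc.1 hz.1), lt_of_lt_of_le hz.2 hy.2⟩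
      have : D z = (hd z hz').choose := by rw [hDdef]; simp [hz']
      rw [this]
      exact ⟨(hd z hz').choose_spec.2.Ici_of_Ioi, (hd z hz').choose_spec.1⟩
    have := image_le_of_deriv_right_le_deriv_boundary (f := fun _ => V c) (f' := fun _ => 0)
      (a := c) (b := y) (B := V) (B' := D) continuousOn_const
      (fun z _ => hasDerivWithinAt_const z _ _) le_rfl
      (hV.mono (Set.Icc_subset_Icc (hx.1.trans (le_of_lt hc.1)) hy.2))
      (fun z hz => (hprop z hz).1) (fun z hz => (hprop z hz).2)
    exact this (Set.right_mem_Icc.mpr hc.2.le)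
  have hne : (𝓝[Set.Ioo x y] x).NeBot := by
    apply mem_closure_iff_nhdsWithin_neBot.mp
    rw [closure_Ioo hxy.ne]
    exact Set.left_mem_Icc.mpr hxy.le
  have hten : Tendsto V (𝓝[Set.Ioo x y] x) (𝓝 (V x)) :=
    (hV x hx).tendsto.mono_left
      (nhdsWithin_mono x (fun t ht => ⟨hx.1.trans ht.1.le, ht.2.le.trans hy.2⟩))
  exact le_of_tendsto hten (eventually_mem_nhdsWithin.mono key)

/-- A continuous function on `[a,b]` with nonnegative left derivatives on `(a,b)`
is monotone on `[a,b]`. -/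
lemma mono_of_deriv_left {a b : ℝ} {V : ℝ → ℝ} (hV : ContinuousOn V (Set.Icc a b))
    (hd : ∀ x ∈ Set.Ioo a b, ∃ L, 0 ≤ L ∧ HasDerivWithinAt V L (Set.Iio x) x) :
    MonotoneOn V (Set.Icc a b) := by
  set W : ℝ → ℝ := fun y => -V (a + b - y) with hWdef
  have hmaps : ∀ y ∈ Set.Icc a b, a + b - y ∈ Set.Icc a b := by
    intro y hy; exact ⟨by linarith [hy.2], by linarith [hy.1]⟩
  have hWc : ContinuousOn W (Set.Icc a b) := by
    apply ContinuousOn.neg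
    exact hV.comp ((continuous_const.sub continuous_id).continuousOn) hmaps
  have hWd : ∀ y ∈ Set.Ioo a b, ∃ L, 0 ≤ L ∧ HasDerivWithinAt W L (Set.Ioi y) y := by
    intro y hy
    have hz : a + b - y ∈ Set.Ioo a b := ⟨by linarith [hy.2], by linarith [hy.1]⟩
    obtain ⟨L, hL0, hL⟩ := hd _ hz
    refine ⟨L, hL0, ?_⟩
    have hφ : HasDerivWithinAt (fun t => a + b - t) (-1) (Set.Ioi y) y := by
      simpa using ((hasDerivAt_id y).const_sub (a + b)).hasDerivWithinAt
    have hmaps2 : Set.MapsTo (fun t => a + b - t) (Set.Ioi y) (Set.Iio (a + b - y)) := by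
      intro t ht; show a + b - t ∈ Set.Iio (a + b - y); simp only [Set.mem_Iio]
      have : y < t := ht; linarith
    have hcomp := HasDerivWithinAt.comp (x := y) hL hφ hmaps2
    have : HasDerivWithinAt (fun t => V (a + b - t)) (L * -1) (Set.Ioi y) y := hcomp
    have := this.neg
    exact this.congr_deriv (by ring)
  have hWm := mono_of_deriv_right hWc hWd
  intro x hx y hy hxy
  have h1 := hWm (hmaps y hy) (hmaps x hx) (by linarith)
  have e1 : a + b - (a + b - y) = y := by ring
  have e2 : a + b - (a + b - x) = x := by ring
  simp only [hWdef, e1, e2, neg_le_neg_iff] at h1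
  linarith [h1]

lemma slope_nonpos_right {a b x L : ℝ} {φ : ℝ → ℝ} (hx : x ∈ Set.Ioo a b)
    (hφ : AntitoneOn φ (Set.Icc a b)) (hL : HasDerivWithinAt φ L (Set.Ioi x) x) : L ≤ 0 := by
  have := slope_nonneg_right hx hφ.neg hL.neg
  linarith

lemma slope_nonpos_left {a b x L : ℝ} {φ : ℝ → ℝ} (hx : x ∈ Set.Ioo a b)
    (hφ : AntitoneOn φ (Set.Icc a b)) (hL : HasDerivWithinAt φ L (Set.Iio x) x) : L ≤ 0 := by
  have := slope_nonneg_left hx hφ.neg hL.neg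
  linarith

lemma key_step (a b : ℝ) (f f' F0 F1 g h P : ℝ → ℝ)
    (hD : (DPlus a b g ∧ DPlus a b h) ∨ (DMinus a b g ∧ DMinus a b h))
    (hg_nonneg : ∀ x ∈ Set.Icc a b, 0 ≤ g x)
    (hh_nonneg : ∀ x ∈ Set.Icc a b, 0 ≤ h x)
    (hg_mono : MonotoneOn g (Set.Icc a b))
    (hh_anti : AntitoneOn h (Set.Icc a b))
    (hgh_anti : AntitoneOn (fun x => g x * h x) (Set.Icc a b))
    (hf_nonneg : ∀ x ∈ Set.Icc a b, 0 ≤ f x)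
    (hF0_nonneg : ∀ x ∈ Set.Icc a b, 0 ≤ F0 x)
    (hfc : ContinuousOn f (Set.Icc a b))
    (hF0c : ContinuousOn F0 (Set.Icc a b))
    (hPc : ContinuousOn P (Set.Icc a b))
    (hfd : ∀ x ∈ Set.Ioo a b, HasDerivAt f (f' x) x)
    (hF0d : ∀ x ∈ Set.Ioo a b, HasDerivAt F0 (F1 x) x)
    (hPd : ∀ x ∈ Set.Ioo a b, HasDerivAt P (f x * g x * h x) x)
    (hP_nonneg : ∀ x ∈ Set.Icc a b, 0 ≤ P x)
    (r p q m : ℕ) (A B : ℝ) (hA : 0 ≤ A) (hB : 0 ≤ B)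
    (hkey : ∀ x ∈ Set.Ioo a b,
      A * m * ((g x * h x) ^ r * h x) * (f x * g x * h x) * P x ^ (m - 1) ≤
        B * ((F1 x * f x ^ p + F0 x * (↑p * f x ^ (p - 1) * f' x)) * g x ^ q)) :
    ∀ x ∈ Set.Icc a b,
      B * (F0 a * f a ^ p * g a ^ q) - A * ((g a * h a) ^ r * h a) * P a ^ m
        + A * ((g x * h x) ^ r * h x) * P x ^ m ≤ B * (F0 x * f x ^ p * g x ^ q) := by
  have gcont : ContinuousOn g (Set.Icc a b) := by rcases hD with ⟨hg, _⟩ | ⟨hg, _⟩ <;> exact hg.1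
  have hcont : ContinuousOn h (Set.Icc a b) := by rcases hD with ⟨_, hh⟩ | ⟨_, hh⟩ <;> exact hh.1
  set V : ℝ → ℝ := fun x =>
    B * (F0 x * f x ^ p * g x ^ q) - A * ((g x * h x) ^ r * h x) * P x ^ m with hVdef
  have hVc : ContinuousOn V (Set.Icc a b) := by
    apply ContinuousOn.sub
    · exact continuousOn_const.mul ((hF0c.mul (hfc.pow p)).mul (gcont.pow q))
    · exact (continuousOn_const.mul (((gcont.mul hcont).pow r).mul hcont)).mul (hPc.pow m)
  have main : ∀ x ∈ Set.Ioo a b, ∀ (s : Set ℝ) (Lg Lh : ℝ),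
      HasDerivWithinAt g Lg s x → HasDerivWithinAt h Lh s x →
      0 ≤ Lg → Lh ≤ 0 → Lg * h x + g x * Lh ≤ 0 →
      ∃ L, 0 ≤ L ∧ HasDerivWithinAt V L s x := by
    intro x hx s Lg Lh hg' hh' hLg hLh hLgh
    have hxI : x ∈ Set.Icc a b := Set.Ioo_subset_Icc_self hx
    have df : HasDerivWithinAt f (f' x) s x := (hfd x hx).hasDerivWithinAt
    have dF0 : HasDerivWithinAt F0 (F1 x) s x := (hF0d x hx).hasDerivWithinAt
    have dP : HasDerivWithinAt P (f x * g x * h x) s x := (hPd x hx).hasDerivWithinAt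
    have d1 : HasDerivWithinAt (fun y => F0 y * f y ^ p)
        (F1 x * f x ^ p + F0 x * (↑p * f x ^ (p - 1) * f' x)) s x := dF0.mul (df.pow p)
    have d2 : HasDerivWithinAt (fun y => g y ^ q) (↑q * g x ^ (q - 1) * Lg) s x := hg'.pow q
    have dLHS : HasDerivWithinAt (fun y => F0 y * f y ^ p * g y ^ q)
        ((F1 x * f x ^ p + F0 x * (↑p * f x ^ (p - 1) * f' x)) * g x ^ q
          + (F0 x * f x ^ p) * (↑q * g x ^ (q - 1) * Lg)) s x := d1.mul d2
    have dgh : HasDerivWithinAt (fun y => g y * h y) (Lg * h x + g x * Lh) s x := hg'.mul hh'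
    have d3 : HasDerivWithinAt (fun y => (g y * h y) ^ r)
        (↑r * (g x * h x) ^ (r - 1) * (Lg * h x + g x * Lh)) s x := dgh.pow r
    have d4 : HasDerivWithinAt (fun y => (g y * h y) ^ r * h y)
        ((↑r * (g x * h x) ^ (r - 1) * (Lg * h x + g x * Lh)) * h x + (g x * h x) ^ r * Lh)
        s x := d3.mul hh'
    have d5 : HasDerivWithinAt (fun y => P y ^ m)
        (↑m * P x ^ (m - 1) * (f x * g x * h x)) s x := dP.pow m
    have d6 : HasDerivWithinAt (fun y => (g y * h y) ^ r * h y * P y ^ m)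
        (((↑r * (g x * h x) ^ (r - 1) * (Lg * h x + g x * Lh)) * h x + (g x * h x) ^ r * Lh)
            * P x ^ m
          + ((g x * h x) ^ r * h x) * (↑m * P x ^ (m - 1) * (f x * g x * h x))) s x := d4.mul d5
    have hgx := hg_nonneg x hxI
    have hhx := hh_nonneg x hxI
    have hfx := hf_nonneg x hxI
    have hPx := hP_nonneg x hxI
    have hF0x := hF0_nonneg x hxI
    refine ⟨B * ((F1 x * f x ^ p + F0 x * (↑p * f x ^ (p - 1) * f' x)) * g x ^ q
          + (F0 x * f x ^ p) * (↑q * g x ^ (q - 1) * Lg))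
        - A * ((((↑r * (g x * h x) ^ (r - 1) * (Lg * h x + g x * Lh)) * h x
              + (g x * h x) ^ r * Lh)) * P x ^ m
          + ((g x * h x) ^ r * h x) * (↑m * P x ^ (m - 1) * (f x * g x * h x))), ?_, ?_⟩
    · -- nonnegativity of L
      have u1 : A * (((g x * h x) ^ r * h x) * (↑m * P x ^ (m - 1) * (f x * g x * h x))) ≤
          B * ((F1 x * f x ^ p + F0 x * (↑p * f x ^ (p - 1) * f' x)) * g x ^ q) := by
        have h1 := hkey x hx
        have e : A * (((g x * h x) ^ r * h x) * (↑m * P x ^ (m - 1) * (f x * g x * h x)))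
            = A * ↑m * ((g x * h x) ^ r * h x) * (f x * g x * h x) * P x ^ (m - 1) := by ring
        linarith [e ▸ h1]
      have u2 : 0 ≤ B * ((F0 x * f x ^ p) * (↑q * g x ^ (q - 1) * Lg)) := by
        apply mul_nonneg hB
        apply mul_nonneg (mul_nonneg hF0x (pow_nonneg hfx p))
        exact mul_nonneg (mul_nonneg (Nat.cast_nonneg q) (pow_nonneg hgx _)) hLg
      have u3 : A * ((((↑r * (g x * h x) ^ (r - 1) * (Lg * h x + g x * Lh)) * h x
            + (g x * h x) ^ r * Lh)) * P x ^ m) ≤ 0 := by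
        apply mul_nonpos_of_nonneg_of_nonpos hA
        apply mul_nonpos_of_nonpos_of_nonneg _ (pow_nonneg hPx m)
        have t1 : (↑r * (g x * h x) ^ (r - 1) * (Lg * h x + g x * Lh)) * h x ≤ 0 := by
          apply mul_nonpos_of_nonpos_of_nonneg _ hhx
          apply mul_nonpos_of_nonneg_of_nonpos _ hLgh
          exact mul_nonneg (Nat.cast_nonneg r) (pow_nonneg (mul_nonneg hgx hhx) _)
        have t2 : (g x * h x) ^ r * Lh ≤ 0 :=
          mul_nonpos_of_nonneg_of_nonpos (pow_nonneg (mul_nonneg hgx hhx) r) hLh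
        linarith
      nlinarith [u1, u2, u3]
    · have hder := (dLHS.const_mul B).sub (d6.const_mul A)
      have heq : (fun y => B * (F0 y * f y ^ p * g y ^ q)
          - A * ((g y * h y) ^ r * h y * P y ^ m)) = V := by
        funext y; simp only [hVdef]; ring
      exact heq ▸ hder
  have hVmono : MonotoneOn V (Set.Icc a b) := by
    rcases hD with ⟨⟨_, hgd⟩, ⟨_, hhd⟩⟩ | ⟨⟨_, hgd⟩, ⟨_, hhd⟩⟩
    · apply mono_of_deriv_right hVc
      intro x hx
      obtain ⟨Lg, hLg⟩ := hgd x hx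
      obtain ⟨Lh, hLh⟩ := hhd x hx
      exact main x hx (Set.Ioi x) Lg Lh hLg hLh
        (slope_nonneg_right hx hg_mono hLg)
        (slope_nonpos_right hx hh_anti hLh)
        (slope_nonpos_right hx hgh_anti (hLg.mul hLh))
    · apply mono_of_deriv_left hVc
      intro x hx
      obtain ⟨Lg, hLg⟩ := hgd x hx
      obtain ⟨Lh, hLh⟩ := hhd x hx
      exact main x hx (Set.Iio x) Lg Lh hLg hLh
        (slope_nonneg_left hx hg_mono hLg)
        (slope_nonpos_left hx hh_anti hLh)
        (slope_nonpos_left hx hgh_anti (hLg.mul hLh))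
  intro x hx
  have := hVmono (Set.left_mem_Icc.mpr (hx.1.trans hx.2)) hx hx.1
  simp only [hVdef] at this
  linarith

theorem stmt16 (a b : ℝ) (hab : a < b) (n : ℕ) (hn : 2 ≤ n)
    (f : ℝ → ℝ)
    (hf_diff : ∀ i < n - 1,
      DifferentiableOn ℝ (iteratedDerivWithin i f (Set.Icc a b)) (Set.Icc a b))
    (hf_nonneg : ∀ i ≤ n - 2, ∀ x ∈ Set.Icc a b,
      0 ≤ iteratedDerivWithin i f (Set.Icc a b) x)
    (g h : ℝ → ℝ)
    (hD : (DPlus a b g ∧ DPlus a b h) ∨ (DMinus a b g ∧ DMinus a b h))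
    (hg_nonneg : ∀ x ∈ Set.Icc a b, 0 ≤ g x)
    (hh_nonneg : ∀ x ∈ Set.Icc a b, 0 ≤ h x)
    (hg_mono : MonotoneOn g (Set.Icc a b))
    (hh_anti : AntitoneOn h (Set.Icc a b))
    (hgh_anti : AntitoneOn (fun x => g x * h x) (Set.Icc a b))
    (l : ℕ) (hl1 : 1 ≤ l) (hl2 : l ≤ n)
    (hgrowth : ∀ x ∈ Set.Icc a b,
      ((n.factorial : ℝ) / ((n : ℝ) - 1)) * f x * g x ^ (n - l) * h x ^ n ≤
        iteratedDerivWithin (n - 1) f (Set.Icc a b) x) :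
    (b - a) * f a ^ n * g a ^ l + (∫ x in a..b, f x * g x * h x) ^ n ≤
      ∫ x in a..b, f x ^ n * g x ^ l := by
  have hab' : a ≤ b := hab.le
  have uD : UniqueDiffOn ℝ (Set.Icc a b) := uniqueDiffOn_Icc hab
  have gcont : ContinuousOn g (Set.Icc a b) := by rcases hD with ⟨hg, _⟩ | ⟨hg, _⟩ <;> exact hg.1
  have hcont : ContinuousOn h (Set.Icc a b) := by rcases hD with ⟨_, hh⟩ | ⟨_, hh⟩ <;> exact hh.1
  -- basic facts about f and its iterated derivatives
  have hfc : ContinuousOn f (Set.Icc a b) := by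
    have := (hf_diff 0 (by omega)).continuousOn
    rwa [iteratedDerivWithin_zero] at this
  have hf0 : ∀ x ∈ Set.Icc a b, 0 ≤ f x := by
    intro x hx
    have := hf_nonneg 0 (by omega) x hx
    rwa [iteratedDerivWithin_zero] at this
  have hFd : ∀ i, i < n - 1 → ∀ x ∈ Set.Ioo a b,
      HasDerivAt (iteratedDerivWithin i f (Set.Icc a b))
        (iteratedDerivWithin (i + 1) f (Set.Icc a b) x) x := by
    intro i hi x hx
    have hxI : x ∈ Set.Icc a b := Set.Ioo_subset_Icc_self hx
    have h1 : HasDerivWithinAt (iteratedDerivWithin i f (Set.Icc a b))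
        (derivWithin (iteratedDerivWithin i f (Set.Icc a b)) (Set.Icc a b) x)
        (Set.Icc a b) x := ((hf_diff i hi) x hxI).hasDerivWithinAt
    rw [iteratedDerivWithin_succ]
    exact h1.hasDerivAt (Icc_mem_nhds hx.1 hx.2)
  have hfd : ∀ x ∈ Set.Ioo a b, HasDerivAt f (iteratedDerivWithin 1 f (Set.Icc a b) x) x := by
    intro x hx
    have := hFd 0 (by omega) x hx
    rwa [iteratedDerivWithin_zero] at this
  have hlast_nn : ∀ x ∈ Set.Icc a b, 0 ≤ iteratedDerivWithin (n - 1) f (Set.Icc a b) x := by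
    intro x hx
    refine le_trans ?_ (hgrowth x hx)
    have h2n : (2:ℝ) ≤ (n:ℝ) := by exact_mod_cast hn
    have c1 : (0:ℝ) ≤ (n.factorial : ℝ) / ((n : ℝ) - 1) :=
      div_nonneg (Nat.cast_nonneg _) (by linarith)
    exact mul_nonneg (mul_nonneg (mul_nonneg c1 (hf0 x hx)) (pow_nonneg (hg_nonneg x hx) _))
      (pow_nonneg (hh_nonneg x hx) _)
  have hF1nn : ∀ x ∈ Set.Icc a b, 0 ≤ iteratedDerivWithin 1 f (Set.Icc a b) x := by
    intro x hx
    by_cases h2 : n = 2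
    · have := hlast_nn x hx; rwa [h2] at this
    · exact hf_nonneg 1 (by omega) x hx
  have hfmono : MonotoneOn f (Set.Icc a b) :=
    mono_of_deriv_right hfc (fun x hx =>
      ⟨_, hF1nn x (Set.Ioo_subset_Icc_self hx), (hfd x hx).hasDerivWithinAt⟩)
  -- the primitive P
  set P : ℝ → ℝ := fun x => ∫ t in a..x, f t * g t * h t with hPdef
  have ghc : ContinuousOn (fun t => f t * g t * h t) (Set.Icc a b) := (hfc.mul gcont).mul hcont
  have hint : ∀ x ∈ Set.Icc a b,
      IntervalIntegrable (fun t => f t * g t * h t) MeasureTheory.volume a x := by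
    intro x hx
    exact (ghc.mono (Set.Icc_subset_Icc le_rfl hx.2)).intervalIntegrable_of_Icc hx.1
  have hPc : ContinuousOn P (Set.Icc a b) := by
    have := intervalIntegral.continuousOn_primitive_interval'
      (a := a) (b₁ := a) (b₂ := b) (μ := MeasureTheory.volume)
      (f := fun t => f t * g t * h t) (hint b ⟨hab', le_rfl⟩)
      (by rw [Set.uIcc_of_le hab']; exact Set.left_mem_Icc.mpr hab')
    rwa [Set.uIcc_of_le hab'] at this
  have hPd : ∀ x ∈ Set.Ioo a b, HasDerivAt P (f x * g x * h x) x := by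
    intro x hx
    refine intervalIntegral.integral_hasDerivAt_right (hint x (Set.Ioo_subset_Icc_self hx))
      ?_ ?_
    · exact (ContinuousAt.stronglyMeasurableAtFilter isOpen_Ioo
        (fun y hy => ghc.continuousAt (Icc_mem_nhds hy.1 hy.2)) x hx)
    · exact ghc.continuousAt (Icc_mem_nhds hx.1 hx.2)
  have hPnn : ∀ x ∈ Set.Icc a b, 0 ≤ P x := by
    intro x hx
    apply intervalIntegral.integral_nonneg hx.1
    intro u hu
    have huI : u ∈ Set.Icc a b := ⟨hu.1, hu.2.trans hx.2⟩
    exact mul_nonneg (mul_nonneg (hf0 u huI) (hg_nonneg u huI)) (hh_nonneg u huI)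
  have hPa : P a = 0 := intervalIntegral.integral_same
  -- factorial identity
  have h2n : (2:ℝ) ≤ (n:ℝ) := by exact_mod_cast hn
  have hfact : ((n.factorial : ℕ) : ℝ) / ((n : ℝ) - 1) = (n : ℝ) * ((n - 2).factorial : ℝ) := by
    have e1 : n.factorial = n * ((n - 1) * (n - 2).factorial) := by
      conv_lhs => rw [show n = (n - 1) + 1 by omega]
      rw [Nat.factorial_succ]
      congr 1
      · omega
      · conv_lhs => rw [show n - 1 = (n - 2) + 1 by omega]
        rw [Nat.factorial_succ]
        congr 2 <;> omega
    have e2 : ((n - 1 : ℕ) : ℝ) = (n : ℝ) - 1 := by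
      have h1 : (1:ℕ) ≤ n := by omega
      rw [Nat.cast_sub h1]; norm_num
    rw [e1]
    push_cast
    rw [e2]
    have hne : (n:ℝ) - 1 ≠ 0 := by linarith
    rw [div_eq_iff hne]
    ring
  -- generic application of key_step producing a chain claim
  have chainstep : ∀ r : ℕ, 1 ≤ r → r ≤ n - 2 →
      (∀ y ∈ Set.Ioo a b,
        (n:ℝ) * ((n-2).factorial : ℝ) * ↑(n-1-r) * ((g y * h y) ^ r * h y) *
            (f y * g y * h y) * P y ^ (n-1-r-1) ≤
          ((n-1-r).factorial : ℝ) *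
            ((iteratedDerivWithin (r+1) f (Set.Icc a b) y * f y ^ (n-2-r)
              + iteratedDerivWithin r f (Set.Icc a b) y *
                (↑(n-2-r) * f y ^ (n-2-r-1) * iteratedDerivWithin 1 f (Set.Icc a b) y))
              * g y ^ (l-1))) →
      ∀ x ∈ Set.Icc a b,
        (n:ℝ) * ((n-2).factorial : ℝ) * ((g x * h x) ^ r * h x) * P x ^ (n-1-r) ≤
          ((n-1-r).factorial : ℝ) *
            (iteratedDerivWithin r f (Set.Icc a b) x * f x ^ (n-2-r) * g x ^ (l-1)) := by
    intro r hr1 hr2 hkey x hx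
    have KS := key_step a b f (iteratedDerivWithin 1 f (Set.Icc a b))
      (iteratedDerivWithin r f (Set.Icc a b)) (iteratedDerivWithin (r+1) f (Set.Icc a b))
      g h P hD hg_nonneg hh_nonneg hg_mono hh_anti hgh_anti hf0
      (hf_nonneg r (by omega)) hfc (hf_diff r (by omega)).continuousOn hPc hfd
      (hFd r (by omega)) hPd hPnn r (n-2-r) (l-1) (n-1-r)
      ((n:ℝ) * ((n-2).factorial : ℝ)) (((n-1-r).factorial : ℝ))
      (by positivity) (by positivity) hkey x hx
    have hz : P a ^ (n-1-r) = 0 := by rw [hPa]; exact zero_pow (by omega)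
    rw [hz, mul_zero] at KS
    have haI : a ∈ Set.Icc a b := Set.left_mem_Icc.mpr hab'
    have hb0 : 0 ≤ ((n-1-r).factorial : ℝ) *
        (iteratedDerivWithin r f (Set.Icc a b) a * f a ^ (n-2-r) * g a ^ (l-1)) := by
      apply mul_nonneg (Nat.cast_nonneg _)
      exact mul_nonneg (mul_nonneg (hf_nonneg r (by omega) a haI) (pow_nonneg (hf0 a haI) _))
        (pow_nonneg (hg_nonneg a haI) _)
    linarith [KS]
  -- the chain of claims, by downward induction
  have chain : ∀ k r : ℕ, 1 ≤ r → r ≤ n - 2 → n - 2 - r = k →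
      ∀ x ∈ Set.Icc a b,
        (n:ℝ) * ((n-2).factorial : ℝ) * ((g x * h x) ^ r * h x) * P x ^ (n-1-r) ≤
          ((n-1-r).factorial : ℝ) *
            (iteratedDerivWithin r f (Set.Icc a b) x * f x ^ (n-2-r) * g x ^ (l-1)) := by
    intro k
    induction k with
    | zero =>
      intro r hr1 hr2 hrk
      apply chainstep r hr1 hr2
      intro y hy
      have hyI : y ∈ Set.Icc a b := Set.Ioo_subset_Icc_self hy
      have e1 : n - 1 - r = 1 := by omega
      have e2 : n - 2 - r = 0 := by omega
      rw [e1, e2, show r + 1 = n - 1 by omega]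
      simp only [pow_zero, Nat.cast_zero, zero_mul, mul_zero, add_zero, mul_one,
        Nat.factorial_one, Nat.cast_one, one_mul]
      norm_num
      -- goal : n * (n-2)! * ((g y * h y) ^ r * h y) * (f y * g y * h y) ≤ F (n-1) y * g y ^ (l-1)
      have hg := hgrowth y hyI
      have hgl : 0 ≤ g y ^ (l-1) := pow_nonneg (hg_nonneg y hyI) _
      have step1 := mul_le_mul_of_nonneg_right hg hgl
      have egg : g y ^ (n-l) * g y ^ (l-1) = g y ^ r * g y := by
        rw [← pow_add, show n - l + (l-1) = r + 1 by omega, pow_succ]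
      have ehh : h y ^ n = h y ^ r * h y * h y := by
        rw [← pow_succ, ← pow_succ, show r + 1 + 1 = n by omega]
      have eL : ((n.factorial : ℝ) / ((n:ℝ) - 1)) * f y * g y ^ (n-l) * h y ^ n * g y ^ (l-1)
          = (n:ℝ) * ((n-2).factorial : ℝ) * ((g y * h y) ^ r * h y) * (f y * g y * h y) := by
        calc ((n.factorial : ℝ) / ((n:ℝ) - 1)) * f y * g y ^ (n-l) * h y ^ n * g y ^ (l-1)
            = ((n.factorial : ℝ) / ((n:ℝ) - 1)) * f y * (g y ^ (n-l) * g y ^ (l-1)) * h y ^ n := by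
              ring
          _ = (n:ℝ) * ((n-2).factorial : ℝ) * f y * (g y ^ r * g y) * (h y ^ r * h y * h y) := by
              rw [hfact, egg, ehh]
          _ = (n:ℝ) * ((n-2).factorial : ℝ) * ((g y * h y) ^ r * h y) * (f y * g y * h y) := by
              rw [mul_pow]; ring
      rw [← eL]
      exact step1
    | succ k ih =>
      intro r hr1 hr2 hrk
      apply chainstep r hr1 hr2
      intro y hy
      have hyI : y ∈ Set.Icc a b := Set.Ioo_subset_Icc_self hy
      have hr3 : r + 1 ≤ n - 2 := by omega
      have ihy := ih (r+1) (by omega) hr3 (by omega) y hyI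
      rw [show n - 1 - (r+1) = n - 2 - r by omega, show n - 2 - (r+1) = n - 3 - r by omega] at ihy
      -- multiply by (n-1-r) * f y ≥ 0
      have hc0 : (0:ℝ) ≤ ↑(n-1-r) * f y := mul_nonneg (Nat.cast_nonneg _) (hf0 y hyI)
      rw [pow_succ] at ihy
      have mm := mul_le_mul_of_nonneg_left ihy hc0
      have e4 : n - 1 - r - 1 = n - 2 - r := by omega
      have fs : ((n-1-r).factorial : ℝ) = ↑(n-1-r) * ((n-2-r).factorial : ℝ) := by
        rw [show n - 1 - r = (n - 2 - r) + 1 by omega, Nat.factorial_succ]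
        push_cast
        ring
      have pf : f y ^ (n-2-r) = f y ^ (n-3-r) * f y := by
        rw [← pow_succ, show n - 3 - r + 1 = n - 2 - r by omega]
      rw [e4, fs, pf]
      have hY : 0 ≤ (↑(n-1-r) * ((n-2-r).factorial : ℝ)) *
          ((iteratedDerivWithin r f (Set.Icc a b) y *
            (↑(n-2-r) * f y ^ (n-2-r-1) * iteratedDerivWithin 1 f (Set.Icc a b) y))
            * g y ^ (l-1)) := by
        apply mul_nonneg (mul_nonneg (Nat.cast_nonneg _) (Nat.cast_nonneg _))
        apply mul_nonneg _ (pow_nonneg (hg_nonneg y hyI) _)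
        apply mul_nonneg (hf_nonneg r (by omega) y hyI)
        exact mul_nonneg (mul_nonneg (Nat.cast_nonneg _) (pow_nonneg (hf0 y hyI) _))
          (hF1nn y hyI)
      have eL : (n:ℝ) * ↑(n - 2).factorial * ↑(n - 1 - r) * ((g y * h y) ^ r * h y) *
            (f y * g y * h y) * P y ^ (n - 2 - r)
          = ↑(n - 1 - r) * f y * (↑n * ↑(n - 2).factorial *
              ((g y * h y) ^ r * (g y * h y) * h y) * P y ^ (n - 2 - r)) := by ring
      have eR : (↑(n - 1 - r) * ((n - 2 - r).factorial : ℝ)) *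
            ((iteratedDerivWithin (r + 1) f (Set.Icc a b) y * (f y ^ (n - 3 - r) * f y) +
              iteratedDerivWithin r f (Set.Icc a b) y *
                (↑(n - 2 - r) * f y ^ (n - 2 - r - 1) * iteratedDerivWithin 1 f (Set.Icc a b) y))
              * g y ^ (l - 1))
          = ↑(n - 1 - r) * f y * (↑(n - 2 - r).factorial *
              (iteratedDerivWithin (r + 1) f (Set.Icc a b) y * f y ^ (n - 3 - r) * g y ^ (l - 1)))
            + (↑(n - 1 - r) * ((n - 2 - r).factorial : ℝ)) *
              (iteratedDerivWithin r f (Set.Icc a b) y *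
                (↑(n - 2 - r) * f y ^ (n - 2 - r - 1) * iteratedDerivWithin 1 f (Set.Icc a b) y)
                * g y ^ (l - 1)) := by ring
      rw [eL, eR]
      linarith [mm, hY]
  -- top-level claim (r = 0)
  have hkey0 : ∀ y ∈ Set.Ioo a b,
      (n:ℝ) * ↑(n-1) * ((g y * h y) ^ 0 * h y) * (f y * g y * h y) * P y ^ (n-1-1) ≤
        (1:ℝ) * ((iteratedDerivWithin 1 f (Set.Icc a b) y * f y ^ (n-2)
          + f y * (↑(n-2) * f y ^ (n-2-1) * iteratedDerivWithin 1 f (Set.Icc a b) y))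
          * g y ^ (l-1)) := by
    intro y hy
    have hyI : y ∈ Set.Icc a b := Set.Ioo_subset_Icc_self hy
    by_cases h2 : n = 2
    · subst h2
      norm_num
      have hg := hgrowth y hyI
      norm_num at hg
      have hgl : 0 ≤ g y ^ (l-1) := pow_nonneg (hg_nonneg y hyI) _
      have step1 := mul_le_mul_of_nonneg_right hg hgl
      have egg : g y ^ (2-l) * g y ^ (l-1) = g y := by
        rw [← pow_add, show 2 - l + (l-1) = 1 by omega, pow_one]
      calc (2:ℝ) * h y * (f y * g y * h y)
          = 2 * f y * (g y ^ (2-l) * g y ^ (l-1)) * h y ^ 2 := by rw [egg]; ring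
        _ = 2 * f y * g y ^ (2-l) * h y ^ 2 * g y ^ (l-1) := by ring
        _ ≤ derivWithin f (Set.Icc a b) y * g y ^ (l-1) := step1
    · have hn3 : 3 ≤ n := by omega
      have C1 := chain (n-3) 1 le_rfl (by omega) (by omega) y hyI
      rw [show n - 1 - 1 = n - 2 by omega, show n - 2 - 1 = n - 3 by omega] at C1 ⊢
      -- cancel (n-2)!
      have hpos : (0:ℝ) < ((n-2).factorial : ℝ) := by
        exact_mod_cast Nat.factorial_pos _
      have C1' : (n:ℝ) * ((g y * h y) ^ 1 * h y) * P y ^ (n-2) ≤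
          iteratedDerivWithin 1 f (Set.Icc a b) y * f y ^ (n-3) * g y ^ (l-1) := by
        have e : (n:ℝ) * ((n-2).factorial : ℝ) * ((g y * h y) ^ 1 * h y) * P y ^ (n-2)
            = ((n-2).factorial : ℝ) * ((n:ℝ) * ((g y * h y) ^ 1 * h y) * P y ^ (n-2)) := by ring
        rw [e] at C1
        exact le_of_mul_le_mul_left C1 hpos
      have hc0 : (0:ℝ) ≤ ↑(n-1) * f y := mul_nonneg (Nat.cast_nonneg _) (hf0 y hyI)
      have mm := mul_le_mul_of_nonneg_left C1' hc0
      have ec : ((n-1:ℕ) : ℝ) = 1 + ((n-2:ℕ) : ℝ) := by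
        rw [show n - 1 = (n-2) + 1 by omega]; push_cast; ring
      have pf2 : f y ^ (n-2) = f y ^ (n-3) * f y := by
        rw [← pow_succ, show n - 3 + 1 = n - 2 by omega]
      rw [pf2, ec]
      have eL : (n:ℝ) * (1 + ((n-2:ℕ) : ℝ)) * ((g y * h y) ^ 0 * h y) * (f y * g y * h y) *
            P y ^ (n-2)
          = (1 + ((n-2:ℕ) : ℝ)) * f y * ((n:ℝ) * ((g y * h y) ^ 1 * h y) * P y ^ (n-2)) := by
        ring
      have eR : (1:ℝ) * ((iteratedDerivWithin 1 f (Set.Icc a b) y * (f y ^ (n-3) * f y)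
            + f y * (↑(n-2) * f y ^ (n-3) * iteratedDerivWithin 1 f (Set.Icc a b) y))
            * g y ^ (l-1))
          = (1 + ((n-2:ℕ) : ℝ)) * f y *
              (iteratedDerivWithin 1 f (Set.Icc a b) y * f y ^ (n-3) * g y ^ (l-1)) := by
        ring
      rw [eL, eR]
      calc (1 + ((n-2:ℕ) : ℝ)) * f y * ((n:ℝ) * ((g y * h y) ^ 1 * h y) * P y ^ (n-2))
          = ↑(n-1) * f y * ((n:ℝ) * ((g y * h y) ^ 1 * h y) * P y ^ (n-2)) := by rw [ec]
        _ ≤ ↑(n-1) * f y * (iteratedDerivWithin 1 f (Set.Icc a b) y * f y ^ (n-3) * g y ^ (l-1)) := mm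
        _ = (1 + ((n-2:ℕ) : ℝ)) * f y *
              (iteratedDerivWithin 1 f (Set.Icc a b) y * f y ^ (n-3) * g y ^ (l-1)) := by rw [ec]
  have claim0 : ∀ x ∈ Set.Icc a b,
      f a ^ (n-1) * g a ^ (l-1) + (n:ℝ) * (h x * P x ^ (n-1)) ≤ f x ^ (n-1) * g x ^ (l-1) := by
    intro x hx
    have KS0 := key_step a b f (iteratedDerivWithin 1 f (Set.Icc a b)) f
      (iteratedDerivWithin 1 f (Set.Icc a b)) g h P hD hg_nonneg hh_nonneg hg_mono hh_anti
      hgh_anti hf0 hf0 hfc hfc hPc hfd hfd hPd hPnn 0 (n-2) (l-1) (n-1)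
      (n:ℝ) 1 (Nat.cast_nonneg n) zero_le_one hkey0 x hx
    have hz : P a ^ (n-1) = 0 := by rw [hPa]; exact zero_pow (by omega)
    rw [hz, mul_zero] at KS0
    simp only [pow_zero, one_mul] at KS0
    have ea : f a ^ (n-1) = f a * f a ^ (n-2) := by
      rw [show n - 1 = (n-2) + 1 by omega, pow_succ]; ring
    have ex : f x ^ (n-1) = f x * f x ^ (n-2) := by
      rw [show n - 1 = (n-2) + 1 by omega, pow_succ]; ring
    rw [ea, ex]
    linarith [KS0]
  -- pointwise inequality
  have star : ∀ x ∈ Set.Icc a b,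
      f a ^ n * g a ^ l + (n:ℝ) * P x ^ (n-1) * (f x * g x * h x) ≤ f x ^ n * g x ^ l := by
    intro x hx
    have haI : a ∈ Set.Icc a b := Set.left_mem_Icc.mpr hab'
    have c0 := claim0 x hx
    have hfa : f a ≤ f x := hfmono haI hx hx.1
    have hga : g a ≤ g x := hg_mono haI hx hx.1
    have hfgx : 0 ≤ f x * g x := mul_nonneg (hf0 x hx) (hg_nonneg x hx)
    have m2 := mul_le_mul_of_nonneg_right c0 hfgx
    have m1 : f a ^ (n-1) * g a ^ (l-1) * (f a * g a) ≤
        f a ^ (n-1) * g a ^ (l-1) * (f x * g x) := by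
      apply mul_le_mul_of_nonneg_left _
        (mul_nonneg (pow_nonneg (hf0 a haI) _) (pow_nonneg (hg_nonneg a haI) _))
      exact mul_le_mul hfa hga (hg_nonneg a haI) (hf0 x hx)
    have en : f x ^ n = f x ^ (n-1) * f x := by
      rw [← pow_succ, show n - 1 + 1 = n by omega]
    have el : g x ^ l = g x ^ (l-1) * g x := by
      rw [← pow_succ, show l - 1 + 1 = l by omega]
    have ena : f a ^ n = f a ^ (n-1) * f a := by
      rw [← pow_succ, show n - 1 + 1 = n by omega]
    have ela : g a ^ l = g a ^ (l-1) * g a := by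
      rw [← pow_succ, show l - 1 + 1 = l by omega]
    rw [en, el, ena, ela]
    linarith [m1, m2]
  -- final integration
  have hPb : P b = ∫ x in a..b, f x * g x * h x := rfl
  have hFTC : (∫ x in a..b, (n:ℝ) * P x ^ (n-1) * (f x * g x * h x)) = P b ^ n - P a ^ n := by
    apply intervalIntegral.integral_eq_sub_of_hasDeriv_right_of_le hab' (hPc.pow n)
    · intro x hx
      exact ((hPd x hx).pow n).hasDerivWithinAt
    · exact ((continuousOn_const.mul (hPc.pow (n-1))).mul ghc).intervalIntegrable_of_Icc hab'
  rw [hPa, zero_pow (by omega : n ≠ 0), sub_zero] at hFTC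
  have hint1 : IntervalIntegrable (fun x => f x ^ n * g x ^ l) MeasureTheory.volume a b :=
    ((hfc.pow n).mul (gcont.pow l)).intervalIntegrable_of_Icc hab'
  have hint2 : IntervalIntegrable (fun x => (n:ℝ) * P x ^ (n-1) * (f x * g x * h x))
      MeasureTheory.volume a b :=
    ((continuousOn_const.mul (hPc.pow (n-1))).mul ghc).intervalIntegrable_of_Icc hab'
  have hint3 : IntervalIntegrable (fun _ : ℝ => f a ^ n * g a ^ l) MeasureTheory.volume a b :=
    intervalIntegrable_const
  have big : 0 ≤ ∫ x in a..b,
      (f x ^ n * g x ^ l - (f a ^ n * g a ^ l + (n:ℝ) * P x ^ (n-1) * (f x * g x * h x))) := by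
    apply intervalIntegral.integral_nonneg hab'
    intro u hu
    have := star u hu
    linarith
  rw [intervalIntegral.integral_sub hint1 (hint3.add hint2),
    intervalIntegral.integral_add hint3 hint2, intervalIntegral.integral_const, hFTC] at big
  rw [← hPb]
  have : (b - a) • (f a ^ n * g a ^ l) = (b - a) * f a ^ n * g a ^ l := by
    rw [smul_eq_mul]; ring
  linarith [big, this.le, this.ge]
end

section
/- Let n ≥ 2 and let f be an (n-1)-times differentiable function on [a,b] with f⁽ⁱ⁾ ≥ 0 for i = 0,…,n-2, and let g be a strictly positive, increasing function on [a,b] belonging to D₊[a,b] or D₋[a,b]. If f⁽ⁿ⁻¹⁾·g ≥ (n!/(n-1))·f on [a,b], then (b-a)·f(a)ⁿ·g(a) + (∫_a^b f)ⁿ ≤ ∫_a^b fⁿ·g. -/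
open Set intervalIntegral MeasureTheory


lemma mono_help {φ ψ : ℝ → ℝ} {p q : ℝ} (hpq : p ≤ q)
    (hc : ContinuousOn φ (Set.Icc p q))
    (hd : ∀ x ∈ Set.Ioo p q, HasDerivAt φ (ψ x) x)
    (h0 : ∀ x ∈ Set.Ioo p q, 0 ≤ ψ x) :
    φ p ≤ φ q := by
  have hm : MonotoneOn φ (Set.Icc p q) := by
    apply monotoneOn_of_deriv_nonneg (convex_Icc p q) hc
    · intro x hx
      rw [interior_Icc] at hx
      exact ((hd x hx).differentiableAt).differentiableWithinAt
    · intro x hx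
      rw [interior_Icc] at hx
      rw [(hd x hx).deriv]
      exact h0 x hx
  exact hm (Set.left_mem_Icc.2 hpq) (Set.right_mem_Icc.2 hpq) hpq

noncomputable def Fit (f : ℝ → ℝ) (a : ℝ) : ℕ → ℝ → ℝ
  | 0 => f
  | j+1 => fun x => ∫ t in a..x, Fit f a j t

@[simp] lemma Fit_zero (f : ℝ → ℝ) (a : ℝ) : Fit f a 0 = f := rfl
lemma Fit_succ (f : ℝ → ℝ) (a : ℝ) (j : ℕ) (x : ℝ) :
    Fit f a (j+1) x = ∫ t in a..x, Fit f a j t := rfl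

lemma Fit_contOn {f : ℝ → ℝ} {a b : ℝ} (hab : a ≤ b)
    (hf : ContinuousOn f (Set.Icc a b)) : ∀ j, ContinuousOn (Fit f a j) (Set.Icc a b) := by
  intro j
  induction j with
  | zero => exact hf
  | succ j ih =>
    have hint : IntegrableOn (Fit f a j) (Set.uIcc a b) := by
      rw [Set.uIcc_of_le hab]
      exact ih.integrableOn_compact isCompact_Icc
    have := intervalIntegral.continuousOn_primitive_interval (μ := volume) hint
    rwa [Set.uIcc_of_le hab] at this

lemma Fit_a {f : ℝ → ℝ} {a : ℝ} (j : ℕ) : Fit f a (j+1) a = 0 := by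
  simp [Fit_succ]

lemma Fit_nonneg {f : ℝ → ℝ} {a b : ℝ}
    (h0 : ∀ x ∈ Set.Icc a b, 0 ≤ f x) :
    ∀ j, ∀ x ∈ Set.Icc a b, 0 ≤ Fit f a j x := by
  intro j
  induction j with
  | zero => exact h0
  | succ j ih =>
    intro x hx
    rw [Fit_succ]
    apply intervalIntegral.integral_nonneg hx.1
    intro t ht
    exact ih t ⟨ht.1, le_trans ht.2 hx.2⟩

lemma Fit_hasDerivAt {f : ℝ → ℝ} {a b : ℝ} (hab : a ≤ b)
    (hf : ContinuousOn f (Set.Icc a b)) (j : ℕ) :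
    ∀ x ∈ Set.Ioo a b, HasDerivAt (Fit f a (j+1)) (Fit f a j x) x := by
  intro x hx
  have hcont := Fit_contOn hab hf j
  have hint : IntervalIntegrable (Fit f a j) volume a x := by
    apply ContinuousOn.intervalIntegrable
    rw [Set.uIcc_of_le hx.1.le]
    exact hcont.mono (Set.Icc_subset_Icc le_rfl hx.2.le)
  have hmeas : StronglyMeasurableAtFilter (Fit f a j) (nhds x) := by
    have hco : ContinuousOn (Fit f a j) (Set.Ioo a b) := hcont.mono Set.Ioo_subset_Icc_self
    exact hco.stronglyMeasurableAtFilter isOpen_Ioo x hx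
  have hca : ContinuousAt (Fit f a j) x :=
    (hcont.mono Set.Ioo_subset_Icc_self).continuousAt (isOpen_Ioo.mem_nhds hx)
  exact intervalIntegral.integral_hasDerivAt_right hint hmeas hca



theorem stmt17 (a b : ℝ) (hab : a < b) (n : ℕ) (hn : 2 ≤ n)
    (f : ℝ → ℝ)
    (hf_diff : ∀ i < n - 1,
      DifferentiableOn ℝ (iteratedDerivWithin i f (Set.Icc a b)) (Set.Icc a b))
    (hf_nonneg : ∀ i ≤ n - 2, ∀ x ∈ Set.Icc a b,
      0 ≤ iteratedDerivWithin i f (Set.Icc a b) x)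
    (g : ℝ → ℝ) (hg_pos : ∀ x ∈ Set.Icc a b, 0 < g x)
    (hg_mono : MonotoneOn g (Set.Icc a b))
    (hD : DPlus a b g ∨ DMinus a b g)
    (hgrowth : ∀ x ∈ Set.Icc a b,
      ((n.factorial : ℝ) / ((n : ℝ) - 1)) * f x ≤
        iteratedDerivWithin (n - 1) f (Set.Icc a b) x * g x) :
    (b - a) * f a ^ n * g a + (∫ x in a..b, f x) ^ n ≤
      ∫ x in a..b, f x ^ n * g x := by
  obtain ⟨k, rfl⟩ : ∃ k, n = k + 2 := ⟨n - 2, by omega⟩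
  clear hn
  have hab' : a ≤ b := hab.le
  set s : Set ℝ := Set.Icc a b with hs
  set d : ℕ → ℝ → ℝ := fun i => iteratedDerivWithin i f s with hd
  set F : ℕ → ℝ → ℝ := fun j => Fit f a j with hF
  set C : ℝ := ((k : ℝ) + 2) * (k.factorial : ℝ) with hCdef
  have has : a ∈ s := Set.left_mem_Icc.2 hab'
  have hbs : b ∈ s := Set.right_mem_Icc.2 hab'
  have hf_diff' : ∀ i ≤ k, DifferentiableOn ℝ (d i) s := fun i hi => hf_diff i (by omega)
  have hf_nonneg' : ∀ i ≤ k, ∀ x ∈ s, 0 ≤ d i x := fun i hi => hf_nonneg i (by omega)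
  have hd0 : d 0 = f := iteratedDerivWithin_zero
  have hfc : ContinuousOn f s := hd0 ▸ (hf_diff' 0 (Nat.zero_le _)).continuousOn
  have hf_nn : ∀ x ∈ s, 0 ≤ f x := by
    intro x hx
    have := hf_nonneg' 0 (Nat.zero_le _) x hx
    rwa [hd0] at this
  have hkfac_pos : (0:ℝ) < (k.factorial : ℝ) := by positivity
  have hC_pos : 0 < C := by positivity
  -- rewrite the growth hypothesis
  have hgro : ∀ x ∈ s, C * f x ≤ d (k+1) x * g x := by
    intro x hx
    have h := hgrowth x hx
    have hCeq : (((k+2).factorial : ℝ)) / (((k+2 : ℕ) : ℝ) - 1) = C := by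
      rw [hCdef]
      have h1 : (((k+2).factorial : ℝ)) = ((k:ℝ)+2) * (((k:ℝ)+1) * (k.factorial:ℝ)) := by
        rw [show k+2 = (k+1)+1 from rfl, Nat.factorial_succ, Nat.factorial_succ]
        push_cast; ring
      have h2 : (((k+2 : ℕ) : ℝ)) - 1 = (k:ℝ) + 1 := by push_cast; ring
      rw [h1, h2]
      have h3 : (k:ℝ) + 1 ≠ 0 := by positivity
      field_simp
    rw [hCeq] at h
    exact h
  have hdm_nn : ∀ x ∈ s, 0 ≤ d (k+1) x := by
    intro x hx
    have h1 := hgro x hx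
    have h2 := hg_pos x hx
    have h3 := hf_nn x hx
    nlinarith
  have hd1_nn : ∀ x ∈ s, 0 ≤ d 1 x := by
    rcases Nat.eq_zero_or_pos k with hk | hk
    · intro x hx
      have := hdm_nn x hx
      rwa [hk] at this
    · exact hf_nonneg' 1 hk
  -- derivative facts for the iterated derivatives
  have hDd : ∀ i ≤ k, ∀ x ∈ Set.Ioo a b, HasDerivAt (d i) (d (i+1) x) x := by
    intro i hi x hx
    have hxs : x ∈ s := Set.Ioo_subset_Icc_self hx
    have hdiff := hf_diff' i hi x hxs
    have hu : UniqueDiffWithinAt ℝ s x := (uniqueDiffOn_Icc hab) x hxs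
    have h1 : HasDerivWithinAt (d i) (derivWithin (d i) s x) s x := hdiff.hasDerivWithinAt
    have h2 : derivWithin (d i) s x = d (i+1) x := (congrFun iteratedDerivWithin_succ x).symm
    rw [h2] at h1
    exact h1.hasDerivAt (Icc_mem_nhds hx.1 hx.2)
  have hfD : ∀ x ∈ Set.Ioo a b, HasDerivAt f (d 1 x) x := by
    intro x hx
    have := hDd 0 (Nat.zero_le _) x hx
    rwa [hd0] at this
  -- facts about the iterated primitives
  have hFc : ∀ j, ContinuousOn (F j) s := Fit_contOn hab' hfc
  have hFd : ∀ j, ∀ x ∈ Set.Ioo a b, HasDerivAt (F (j+1)) (F j x) x :=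
    fun j => Fit_hasDerivAt hab' hfc j
  have hFnn : ∀ j, ∀ x ∈ s, 0 ≤ F j x := Fit_nonneg hf_nn
  have hFa : ∀ j, F (j+1) a = 0 := fun j => Fit_a j
  have hF0 : ∀ x, F 0 x = f x := fun _ => rfl
  -- the chain of inequalities coming from the growth hypothesis
  have hchain : ∀ j i, i + j = k + 1 → ∀ x ∈ s, ∀ t ∈ Set.Icc a x,
      C * F j t ≤ d i t * g x := by
    intro j
    induction j with
    | zero =>
      intro i hij x hx t ht
      have hi : i = k + 1 := by omega
      subst hi
      have hts : t ∈ s := ⟨ht.1, le_trans ht.2 hx.2⟩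
      have h1 : C * F 0 t ≤ d (k+1) t * g t := by rw [hF0]; exact hgro t hts
      have h2 : d (k+1) t * g t ≤ d (k+1) t * g x :=
        mul_le_mul_of_nonneg_left (hg_mono hts hx ht.2) (hdm_nn t hts)
      linarith
    | succ j ih =>
      intro i hij x hx t ht
      have hik : (i+1) + j = k + 1 := by omega
      have hik' : i ≤ k := by omega
      have hts : t ∈ s := ⟨ht.1, le_trans ht.2 hx.2⟩
      have hsub : Set.Icc a t ⊆ s := Set.Icc_subset_Icc le_rfl hts.2
      have key : d i a * g x - C * F (j+1) a ≤ d i t * g x - C * F (j+1) t := by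
        apply mono_help ht.1
          (ψ := fun u => d (i+1) u * g x - C * F j u)
        · exact (((hf_diff' i hik').continuousOn.mono hsub).mul continuousOn_const).sub
            (continuousOn_const.mul ((hFc (j+1)).mono hsub))
        · intro u hu
          have hu' : u ∈ Set.Ioo a b := ⟨hu.1, lt_of_lt_of_le hu.2 hts.2⟩
          exact ((hDd i hik' u hu').mul_const (g x)).sub ((hFd j u hu').const_mul C)
        · intro u hu
          have hu2 : u ∈ Set.Icc a x := ⟨hu.1.le, le_trans hu.2.le ht.2⟩
          have := ih (i+1) hik x hx u hu2
          linarith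
      have h3 : 0 ≤ d i a * g x :=
        mul_nonneg (hf_nonneg' i hik' a has) (hg_pos x hx).le
      have h4 : F (j+1) a = 0 := hFa j
      rw [h4] at key
      linarith
  -- power lemma : F1^(j+1) ≤ (j+1)! * F_(j+1) * f^j
  have hPL : ∀ j, ∀ x ∈ s, F 1 x ^ (j+1) ≤ ((j+1).factorial : ℝ) * F (j+1) x * f x ^ j := by
    intro j
    induction j with
    | zero =>
      intro x hx
      simp [Nat.factorial]
    | succ j ih =>
      intro x hx
      have hsub : Set.Icc a x ⊆ s := Set.Icc_subset_Icc le_rfl hx.2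
      have key : (((j+2).factorial : ℝ)) * (F (j+2) a * f a ^ (j+1)) - F 1 a ^ (j+2) ≤
          (((j+2).factorial : ℝ)) * (F (j+2) x * f x ^ (j+1)) - F 1 x ^ (j+2) := by
        apply mono_help hx.1
          (ψ := fun u => (((j+2).factorial : ℝ)) *
              (F (j+1) u * f u ^ (j+1) + F (j+2) u * (((j+1 : ℕ) : ℝ) * f u ^ j * d 1 u)) -
            ((j+2 : ℕ) : ℝ) * F 1 u ^ (j+1) * F 0 u)
        · exact (continuousOn_const.mul (((hFc (j+2)).mono hsub).mul
            ((hfc.mono hsub).pow _))).sub (((hFc 1).mono hsub).pow _)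
        · intro u hu
          have hu' : u ∈ Set.Ioo a b := ⟨hu.1, lt_of_lt_of_le hu.2 hx.2⟩
          exact (((hFd (j+1) u hu').mul ((hfD u hu').pow (j+1))).const_mul _).sub
            ((hFd 0 u hu').pow (j+2))
        · intro u hu
          have hu' : u ∈ Set.Ioo a b := ⟨hu.1, lt_of_lt_of_le hu.2 hx.2⟩
          have hus : u ∈ s := Set.Ioo_subset_Icc_self hu'
          have h1 := ih u hus
          have hfu := hf_nn u hus
          have e1 : (((j+2).factorial : ℝ)) = ((j:ℝ)+2) * ((j+1).factorial : ℝ) := by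
            rw [Nat.factorial_succ]; push_cast; ring
          have h2 : ((j:ℝ)+2) * F 1 u ^ (j+1) * f u ≤
              ((j:ℝ)+2) * (((j+1).factorial : ℝ) * F (j+1) u * f u ^ j) * f u := by
            have := mul_le_mul_of_nonneg_right h1 hfu
            nlinarith
          have h3 : 0 ≤ (((j+2).factorial : ℝ)) * (F (j+2) u * (((j+1 : ℕ) : ℝ) * f u ^ j * d 1 u)) := by
            apply mul_nonneg (by positivity)
            apply mul_nonneg (hFnn (j+2) u hus)
            apply mul_nonneg (mul_nonneg (by positivity) (pow_nonneg hfu j)) (hd1_nn u hus)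
          have h4 : ((j:ℝ)+2) * (((j+1).factorial : ℝ) * F (j+1) u * f u ^ j) * f u =
              (((j+2).factorial : ℝ)) * (F (j+1) u * f u ^ (j+1)) := by
            rw [e1, pow_succ]; ring
          have h5 : (((j+2).factorial : ℝ)) *
              (F (j+1) u * f u ^ (j+1) + F (j+2) u * (((j+1 : ℕ) : ℝ) * f u ^ j * d 1 u)) =
              (((j+2).factorial : ℝ)) * (F (j+1) u * f u ^ (j+1)) +
              (((j+2).factorial : ℝ)) * (F (j+2) u * (((j+1 : ℕ) : ℝ) * f u ^ j * d 1 u)) := by ring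
          have h6 : ((j+2 : ℕ) : ℝ) * F 1 u ^ (j+1) * F 0 u = ((j:ℝ)+2) * F 1 u ^ (j+1) * f u := by
            rw [hF0]; push_cast; ring
          rw [h5, h6]
          linarith
      have h7 : F (j+2) a = 0 := hFa (j+1)
      have h8 : F 1 a = 0 := hFa 0
      rw [h7, h8] at key
      rw [zero_pow (by omega : j + 2 ≠ 0)] at key
      show F 1 x ^ (j+2) ≤ ((j+2).factorial : ℝ) * F (j+2) x * f x ^ (j+1)
      linarith [key]
  -- combined power inequality (P): (k+2) * F1^k * f ≤ C * F_k * f^k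
  have hP : ∀ x ∈ s, ((k:ℝ)+2) * (F 1 x ^ k * f x) ≤ C * (F k x * f x ^ k) := by
    intro x hx
    rcases Nat.eq_zero_or_pos k with hk | hk
    · have hC0 : C = 2 := by rw [hCdef, hk]; norm_num [Nat.factorial]
      rw [hC0, hk]
      simp only [pow_zero, one_mul, mul_one, hF0]
      push_cast
      linarith [hf_nn x hx]
    · obtain ⟨j, hj⟩ : ∃ j, k = j + 1 := ⟨k - 1, by omega⟩
      rw [hj]
      have hCj : C = ((j:ℝ)+3) * (((j+1).factorial : ℝ)) := by
        rw [hCdef, hj]; push_cast; ring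
      have h2 := mul_le_mul_of_nonneg_right (hPL j x hx) (hf_nn x hx)
      have h3 : ((j:ℝ)+3) * (F 1 x ^ (j+1) * f x) ≤
          ((j:ℝ)+3) * ((((j+1).factorial : ℝ)) * F (j+1) x * f x ^ j * f x) := by
        apply mul_le_mul_of_nonneg_left _ (by positivity)
        linarith [h2]
      have h4 : ((j:ℝ)+3) * ((((j+1).factorial : ℝ)) * F (j+1) x * f x ^ j * f x) =
          (((j:ℝ)+3) * (((j+1).factorial : ℝ))) * (F (j+1) x * f x ^ (j+1)) := by
        rw [pow_succ]; ring
      have h5 : ((j+1 : ℕ) : ℝ) + 2 = (j:ℝ) + 3 := by push_cast; ring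
      rw [h5, hCj]
      linarith [h3, h4]
  -- inequality (i): (k+2) * F1(t)^(k+1) ≤ g(x) * f(t)^(k+1) for a ≤ t ≤ x
  have hi6 : ∀ x ∈ s, ∀ t ∈ Set.Icc a x, ((k:ℝ)+2) * F 1 t ^ (k+1) ≤ g x * f t ^ (k+1) := by
    intro x hx t ht
    have hts : t ∈ s := ⟨ht.1, le_trans ht.2 hx.2⟩
    have hsub : Set.Icc a t ⊆ s := Set.Icc_subset_Icc le_rfl hts.2
    have key : g x * f a ^ (k+1) - ((k:ℝ)+2) * F 1 a ^ (k+1) ≤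
        g x * f t ^ (k+1) - ((k:ℝ)+2) * F 1 t ^ (k+1) := by
      apply mono_help ht.1
        (ψ := fun u => g x * (((k+1 : ℕ) : ℝ) * f u ^ k * d 1 u) -
          ((k:ℝ)+2) * (((k+1 : ℕ) : ℝ) * F 1 u ^ k * F 0 u))
      · exact (continuousOn_const.mul ((hfc.mono hsub).pow _)).sub
          (continuousOn_const.mul (((hFc 1).mono hsub).pow _))
      · intro u hu
        have hu' : u ∈ Set.Ioo a b := ⟨hu.1, lt_of_lt_of_le hu.2 hts.2⟩
        exact (((hfD u hu').pow (k+1)).const_mul (g x)).sub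
          (((hFd 0 u hu').pow (k+1)).const_mul _)
      · intro u hu
        have hu' : u ∈ Set.Ioo a b := ⟨hu.1, lt_of_lt_of_le hu.2 hts.2⟩
        have hus : u ∈ s := Set.Ioo_subset_Icc_self hu'
        have hu2 : u ∈ Set.Icc a x := ⟨hu.1.le, le_trans hu.2.le ht.2⟩
        have hA1 := hP u hus
        have hA2 := hchain k 1 (by omega) x hx u hu2
        have hA3 : C * (F k u * f u ^ k) = (C * F k u) * f u ^ k := by ring
        have hA4 : (C * F k u) * f u ^ k ≤ (d 1 u * g x) * f u ^ k :=
          mul_le_mul_of_nonneg_right hA2 (pow_nonneg (hf_nn u hus) k)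
        have hA : ((k:ℝ)+2) * (F 1 u ^ k * f u) ≤ d 1 u * g x * f u ^ k := by
          rw [hA3] at hA1; linarith
        have hB := mul_le_mul_of_nonneg_left hA (show (0:ℝ) ≤ (k:ℝ)+1 by positivity)
        have h6 : ((k+1 : ℕ) : ℝ) = (k:ℝ) + 1 := by push_cast; ring
        rw [h6, hF0]
        nlinarith [hB]
    have h7 : F 1 a = 0 := hFa 0
    rw [h7, zero_pow (by omega : k + 1 ≠ 0)] at key
    have h8 : 0 ≤ g x * f a ^ (k+1) :=
      mul_nonneg (hg_pos x hx).le (pow_nonneg (hf_nn a has) _)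
    linarith
  -- main pointwise inequality (W)
  have hW : ∀ x ∈ s, ((k:ℝ)+2) * (F 1 x ^ (k+1) * f x) + g x * f a ^ (k+2) ≤
      g x * f x ^ (k+2) := by
    intro x hx
    have hsub : Set.Icc a x ⊆ s := Set.Icc_subset_Icc le_rfl hx.2
    have key : g x * f a ^ (k+2) - ((k:ℝ)+2) * (F 1 a ^ (k+1) * f a) ≤
        g x * f x ^ (k+2) - ((k:ℝ)+2) * (F 1 x ^ (k+1) * f x) := by
      apply mono_help hx.1
        (ψ := fun u => g x * (((k+2 : ℕ) : ℝ) * f u ^ (k+1) * d 1 u) -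
          ((k:ℝ)+2) * ((((k+1 : ℕ) : ℝ) * F 1 u ^ k * F 0 u) * f u + F 1 u ^ (k+1) * d 1 u))
      · exact (continuousOn_const.mul ((hfc.mono hsub).pow _)).sub
          (continuousOn_const.mul ((((hFc 1).mono hsub).pow _).mul (hfc.mono hsub)))
      · intro u hu
        have hu' : u ∈ Set.Ioo a b := ⟨hu.1, lt_of_lt_of_le hu.2 hx.2⟩
        exact (((hfD u hu').pow (k+2)).const_mul (g x)).sub
          (((((hFd 0 u hu').pow (k+1)).mul (hfD u hu'))).const_mul _)
      · intro u hu
        have hu' : u ∈ Set.Ioo a b := ⟨hu.1, lt_of_lt_of_le hu.2 hx.2⟩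
        have hus : u ∈ s := Set.Ioo_subset_Icc_self hu'
        have hu2 : u ∈ Set.Icc a x := ⟨hu.1.le, hu.2.le⟩
        have hA1 := hP u hus
        have hA2 := hchain k 1 (by omega) x hx u hu2
        have hA4 : (C * F k u) * f u ^ k ≤ (d 1 u * g x) * f u ^ k :=
          mul_le_mul_of_nonneg_right hA2 (pow_nonneg (hf_nn u hus) k)
        have hA : ((k:ℝ)+2) * (F 1 u ^ k * f u) ≤ d 1 u * g x * f u ^ k := by
          nlinarith [hA1, hA4]
        -- multiply hA by (k+1) * f u ≥ 0
        have hC1 := mul_le_mul_of_nonneg_left hA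
          (mul_nonneg (show (0:ℝ) ≤ (k:ℝ)+1 by positivity) (hf_nn u hus))
        -- multiply (i) by d 1 u ≥ 0
        have hB2 := hi6 x hx u hu2
        have hC2 := mul_le_mul_of_nonneg_right hB2 (hd1_nn u hus)
        have h6 : ((k+1 : ℕ) : ℝ) = (k:ℝ) + 1 := by push_cast; ring
        have h7 : ((k+2 : ℕ) : ℝ) = (k:ℝ) + 2 := by push_cast; ring
        rw [h6, h7, hF0]
        have e1 : f u ^ (k+1) = f u ^ k * f u := pow_succ _ _
        have e2 : F 1 u ^ (k+1) = F 1 u ^ k * F 1 u := pow_succ _ _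
        rw [e1, e2] at hC2 ⊢
        linarith [hC1, hC2]
    have h8 : F 1 a = 0 := hFa 0
    rw [h8, zero_pow (by omega : k + 1 ≠ 0)] at key
    linarith [key]
  -- pointwise integrand comparison
  have hpsi : ∀ x ∈ s, f a ^ (k+2) * g a + ((k:ℝ)+2) * (F 1 x ^ (k+1) * f x) ≤
      f x ^ (k+2) * g x := by
    intro x hx
    have h1 := hW x hx
    have h2 : g a * f a ^ (k+2) ≤ g x * f a ^ (k+2) :=
      mul_le_mul_of_nonneg_right (hg_mono has hx hx.1) (pow_nonneg (hf_nn a has) _)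
    linarith
  -- continuity of g
  have hgc : ContinuousOn g s := hD.elim (fun h => h.1) (fun h => h.1)
  -- integrability
  have hint_rhs : IntervalIntegrable (fun x => f x ^ (k+2) * g x) volume a b := by
    apply ContinuousOn.intervalIntegrable
    rw [Set.uIcc_of_le hab']
    exact (hfc.pow _).mul hgc
  have hcontL : ContinuousOn (fun x => ((k:ℝ)+2) * (F 1 x ^ (k+1) * f x)) s :=
    continuousOn_const.mul (((hFc 1).pow _).mul hfc)
  have hint_mid : IntervalIntegrable (fun x => ((k:ℝ)+2) * (F 1 x ^ (k+1) * f x)) volume a b := by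
    apply ContinuousOn.intervalIntegrable
    rw [Set.uIcc_of_le hab']
    exact hcontL
  have hint_lhs : IntervalIntegrable
      (fun x => f a ^ (k+2) * g a + ((k:ℝ)+2) * (F 1 x ^ (k+1) * f x)) volume a b :=
    (_root_.intervalIntegrable_const).add hint_mid
  have hmono := intervalIntegral.integral_mono_on hab' hint_lhs hint_rhs hpsi
  -- FTC: integral of the middle term
  have hFTC : (∫ x in a..b, ((k:ℝ)+2) * (F 1 x ^ (k+1) * f x)) = F 1 b ^ (k+2) := by
    have hderiv : ∀ x ∈ Set.Ioo a b, HasDerivWithinAt (fun y => F 1 y ^ (k+2))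
        (((k:ℝ)+2) * (F 1 x ^ (k+1) * f x)) (Set.Ioi x) x := by
      intro x hx
      have h := (hFd 0 x hx).pow (k+2)
      have h2 : ((k+2 : ℕ) : ℝ) * F 1 x ^ (k+2-1) * F 0 x = ((k:ℝ)+2) * (F 1 x ^ (k+1) * f x) := by
        rw [hF0]; push_cast; ring
      rw [h2] at h
      exact h.hasDerivWithinAt
    have hu : ContinuousOn (fun y => F 1 y ^ (k+2)) (Set.Icc a b) := (hFc 1).pow _
    have := intervalIntegral.integral_eq_sub_of_hasDeriv_right_of_le hab' hu hderiv hint_mid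
    rw [this, hFa 0, zero_pow (by omega : k + 2 ≠ 0), sub_zero]
  -- assemble
  have hsplit : (∫ x in a..b, (f a ^ (k+2) * g a + ((k:ℝ)+2) * (F 1 x ^ (k+1) * f x))) =
      (b - a) * (f a ^ (k+2) * g a) + F 1 b ^ (k+2) := by
    rw [intervalIntegral.integral_add _root_.intervalIntegrable_const hint_mid,
      intervalIntegral.integral_const, smul_eq_mul, hFTC]
  rw [hsplit] at hmono
  have hFb : (∫ x in a..b, f x) = F 1 b := rfl
  rw [hFb]
  linarith [hmono]
end

section
/- Let n ≥ 2 and let f be a strictly positive, n-times differentiable function on [a,b] with f⁽ⁱ⁾ ≥ 0 for i = 1,…,n-2. Suppose f⁽ⁿ⁻¹⁾ is strictly positive on [a,b] and f/f⁽ⁿ⁻¹⁾ is increasing on [a,b]. Then (b-a)·f(a)^{n+1}/f⁽ⁿ⁻¹⁾(a) + ((n-1)/n!)·(∫_a^b f)ⁿ ≤ ∫_a^b f^{n+1}/f⁽ⁿ⁻¹⁾. -/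
lemma aux_le (a b : ℝ) (q φ ψ φ' ψ' : ℝ → ℝ)
    (hq : MonotoneOn q (Set.Icc a b))
    (hφc : ContinuousOn φ (Set.Icc a b)) (hψc : ContinuousOn ψ (Set.Icc a b))
    (hφd : ∀ x ∈ Set.Ioo a b, HasDerivAt φ (φ' x) x)
    (hψd : ∀ x ∈ Set.Ioo a b, HasDerivAt ψ (ψ' x) x)
    (hψ'0 : ∀ x ∈ Set.Ioo a b, 0 ≤ ψ' x)
    (hle : ∀ x ∈ Set.Ioo a b, φ' x ≤ q x * ψ' x)
    (ha : φ a ≤ q a * ψ a) (hψa : 0 ≤ ψ a) :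
    ∀ x ∈ Set.Icc a b, φ x ≤ q x * ψ x := by
  intro x hx
  rcases eq_or_lt_of_le hx.1 with h | h
  · rw [← h]; exact ha
  · have hsub : Set.Icc a x ⊆ Set.Icc a b := Set.Icc_subset_Icc le_rfl hx.2
    have hsub' : Set.Ioo a x ⊆ Set.Ioo a b := Set.Ioo_subset_Ioo le_rfl hx.2
    have hu : MonotoneOn (fun t => q x * ψ t - φ t) (Set.Icc a x) := by
      apply monotoneOn_of_deriv_nonneg (convex_Icc a x)
      · exact (continuousOn_const.mul (hψc.mono hsub)).sub (hφc.mono hsub)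
      · rw [interior_Icc]
        intro t ht
        exact (((hψd t (hsub' ht)).const_mul (q x)).sub
          (hφd t (hsub' ht))).differentiableAt.differentiableWithinAt
      · rw [interior_Icc]
        intro t ht
        have hD := ((hψd t (hsub' ht)).const_mul (q x)).sub (hφd t (hsub' ht))
        rw [show deriv (fun t => q x * ψ t - φ t) t = q x * ψ' t - φ' t from hD.deriv]
        have h1 : q t ≤ q x := hq (hsub (Set.Ioo_subset_Icc_self ht)) hx ht.2.le
        have h2 := hψ'0 t (hsub' ht)
        have h3 := hle t (hsub' ht)
        nlinarith
    have h5 := hu (Set.left_mem_Icc.2 h.le) (Set.right_mem_Icc.2 h.le) h.le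
    have h6 : q a ≤ q x := hq (Set.left_mem_Icc.2 (le_trans h.le hx.2)) hx h.le
    simp only at h5
    nlinarith [mul_le_mul_of_nonneg_right h6 hψa]

theorem stmt18 (a b : ℝ) (hab : a < b) (n : ℕ) (hn : 2 ≤ n)
    (f : ℝ → ℝ) (hf_pos : ∀ x ∈ Set.Icc a b, 0 < f x)
    (hf_diff : ∀ i < n,
      DifferentiableOn ℝ (iteratedDerivWithin i f (Set.Icc a b)) (Set.Icc a b))
    (hf_nonneg : ∀ i, 1 ≤ i → i ≤ n - 2 → ∀ x ∈ Set.Icc a b,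
      0 ≤ iteratedDerivWithin i f (Set.Icc a b) x)
    (hf_pos' : ∀ x ∈ Set.Icc a b, 0 < iteratedDerivWithin (n - 1) f (Set.Icc a b) x)
    (hquot_mono : MonotoneOn
      (fun x => f x / iteratedDerivWithin (n - 1) f (Set.Icc a b) x) (Set.Icc a b)) :
    (b - a) * f a ^ (n + 1) / iteratedDerivWithin (n - 1) f (Set.Icc a b) a +
      (((n : ℝ) - 1) / (n.factorial : ℝ)) * (∫ x in a..b, f x) ^ n ≤
    ∫ x in a..b, f x ^ (n + 1) / iteratedDerivWithin (n - 1) f (Set.Icc a b) x := by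
  obtain ⟨m, rfl⟩ : ∃ m, n = m + 2 := ⟨n - 2, by omega⟩
  clear hn
  simp only [show m + 2 - 1 = m + 1 by omega, show m + 2 - 2 = m by omega,
    show m + 2 + 1 = m + 3 by omega] at hf_nonneg hf_pos' hquot_mono ⊢
  set s : Set ℝ := Set.Icc a b with hs
  set d : ℕ → ℝ → ℝ := fun i => iteratedDerivWithin i f s with hd
  have husub : UniqueDiffOn ℝ s := uniqueDiffOn_Icc hab
  have hd0 : d 0 = f := by simp only [hd]; exact iteratedDerivWithin_zero
  have hdiff : ∀ i, i ≤ m + 1 → DifferentiableOn ℝ (d i) s := fun i hi => hf_diff i (by omega)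
  have hfc : ContinuousOn f s := by
    have := (hdiff 0 (by omega)).continuousOn; rwa [hd0] at this
  have hcont : ∀ i, i ≤ m + 1 → ContinuousOn (d i) s := fun i hi => (hdiff i hi).continuousOn
  have hioo : ∀ x ∈ Set.Ioo a b, s ∈ nhds x := fun x hx => Icc_mem_nhds hx.1 hx.2
  have hder : ∀ i, i ≤ m → ∀ x ∈ Set.Ioo a b, HasDerivAt (d i) (d (i + 1) x) x := by
    intro i hi x hx
    have hda : DifferentiableAt ℝ (d i) x :=
      (hdiff i (by omega) x (Set.Ioo_subset_Icc_self hx)).differentiableAt (hioo x hx)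
    have he : deriv (d i) x = d (i + 1) x := by
      rw [← derivWithin_of_mem_nhds (hioo x hx)]
      exact (congrFun iteratedDerivWithin_succ x).symm
    rw [← he]
    exact hda.hasDerivAt
  have hder0 : ∀ x ∈ Set.Ioo a b, HasDerivAt f (d 1 x) x := by
    intro x hx
    have := hder 0 (by omega) x hx
    rwa [hd0] at this
  have hamem : a ∈ s := Set.left_mem_Icc.2 hab.le
  have hbmem : b ∈ s := Set.right_mem_Icc.2 hab.le
  have hfa : 0 < f a := hf_pos a hamem
  have hgpos : ∀ x ∈ s, 0 < d (m + 1) x := hf_pos'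
  have hd1 : ∀ x ∈ s, 0 ≤ d 1 x := by
    rcases Nat.eq_zero_or_pos m with hm | hm
    · subst hm; exact fun x hx => (hgpos x hx).le
    · exact fun x hx => hf_nonneg 1 le_rfl hm x hx
  have hdk : ∀ i, 1 ≤ i → i ≤ m + 1 → ∀ x ∈ s, 0 ≤ d i x := by
    intro i h1 h2 x hx
    rcases eq_or_lt_of_le h2 with h | h
    · rw [h]; exact (hgpos x hx).le
    · exact hf_nonneg i h1 (by omega) x hx
  set q : ℝ → ℝ := fun x => f x / d (m + 1) x with hq
  have hqmono : MonotoneOn q s := hquot_mono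
  have hqpos : ∀ x ∈ s, 0 < q x := fun x hx => div_pos (hf_pos x hx) (hgpos x hx)
  have hqg : ∀ x ∈ s, q x * d (m + 1) x = f x :=
    fun x hx => div_mul_cancel₀ _ (ne_of_gt (hgpos x hx))
  -- primitives
  have primitive : ∀ u : ℝ → ℝ, ContinuousOn u s →
      ContinuousOn (fun x => ∫ t in a..x, u t) s ∧
      ∀ x ∈ Set.Ioo a b, HasDerivAt (fun y => ∫ t in a..y, u t) (u x) x := by
    intro u hu
    constructor
    · have hint : MeasureTheory.IntegrableOn u (Set.uIcc a b) := by
        rw [Set.uIcc_of_le hab.le]; exact hu.integrableOn_Icc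
      have := intervalIntegral.continuousOn_primitive_interval hint
      rwa [Set.uIcc_of_le hab.le] at this
    · intro x hx
      have hca : ∀ y ∈ Set.Ioo a b, ContinuousAt u y :=
        fun y hy => (hu y (Set.Ioo_subset_Icc_self hy)).continuousAt (hioo y hy)
      have hint : IntervalIntegrable u MeasureTheory.volume a x := by
        apply ContinuousOn.intervalIntegrable
        apply hu.mono
        rw [Set.uIcc_of_le hx.1.le]
        exact Set.Icc_subset_Icc le_rfl hx.2.le
      exact intervalIntegral.integral_hasDerivAt_right hint
        (ContinuousAt.stronglyMeasurableAtFilter isOpen_Ioo hca x hx) (hca x hx)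
  obtain ⟨hFc, hFd⟩ := primitive f hfc
  set F : ℝ → ℝ := fun x => ∫ t in a..x, f t with hF
  have hFa : F a = 0 := intervalIntegral.integral_same

  have T : ∀ k, k + 1 ≤ m → ∀ x ∈ s, F x ^ (k + 1) ≤
      q x * (((k + 1).factorial : ℝ) * (f x ^ k * d (m - k) x)) := by
    intro k
    induction k with
    | zero =>
      intro hk x hx
      simp only [Nat.sub_zero, zero_add, pow_one, pow_zero, one_mul, Nat.factorial_one,
        Nat.cast_one]
      have hdm : 0 ≤ d m a := hdk m hk (by omega) a hamem
      refine aux_le a b q F (d m) f (d (m + 1)) hqmono hFc (hcont m (by omega)) hFd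
        (hder m le_rfl) (fun t ht => (hgpos t (Set.Ioo_subset_Icc_self ht)).le)
        (fun t ht => le_of_eq (hqg t (Set.Ioo_subset_Icc_self ht)).symm)
        (by rw [hFa]; exact mul_nonneg (hqpos a hamem).le hdm) hdm x hx
    | succ k ih =>
      intro hk
      have hk' : k + 1 ≤ m := by omega
      have IH := ih hk'
      have em : m - (k + 1) + 1 = m - k := by omega
      have hfac : ((k + 1 + 1).factorial : ℝ) = (k + 1 + 1) * ((k + 1).factorial : ℝ) := by
        rw [Nat.factorial_succ]; push_cast; ring
      refine aux_le a b q (fun t => F t ^ (k + 1 + 1))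
        (fun t => ((k + 1 + 1).factorial : ℝ) * (f t ^ (k + 1) * d (m - (k + 1)) t))
        (fun t => ((k + 1 + 1 : ℕ) : ℝ) * F t ^ (k + 1) * f t)
        (fun t => ((k + 1 + 1).factorial : ℝ) *
          (((k + 1 : ℕ) : ℝ) * f t ^ k * d 1 t * d (m - (k + 1)) t +
            f t ^ (k + 1) * d (m - k) t)) hqmono ?_ ?_ ?_ ?_ ?_ ?_ ?_ ?_
      · exact hFc.pow _
      · exact continuousOn_const.mul ((hfc.pow _).mul (hcont _ (by omega)))
      · intro t ht
        have h := (hFd t ht).pow (k + 1 + 1)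
        simp only [Nat.add_sub_cancel] at h; exact h
      · intro t ht
        have h1 := (hder0 t ht).pow (k + 1)
        have h2 := hder (m - (k + 1)) (by omega) t ht
        rw [em] at h2
        have h3 := (h1.mul h2).const_mul (((k + 1 + 1).factorial : ℝ))
        simp only [Nat.add_sub_cancel] at h3; exact h3
      · intro t ht
        have ts := Set.Ioo_subset_Icc_self ht
        have e1 : 0 ≤ d 1 t := hd1 t ts
        have e2 : 0 ≤ d (m - (k + 1)) t := hdk _ (by omega) (by omega) t ts
        have e3 : 0 ≤ d (m - k) t := hdk _ (by omega) (by omega) t ts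
        have e4 : 0 ≤ f t := (hf_pos t ts).le
        have e5 : 0 ≤ f t ^ k := pow_nonneg e4 k
        have e6 : 0 ≤ f t ^ (k + 1) := pow_nonneg e4 (k + 1)
        apply mul_nonneg (by positivity)
        apply add_nonneg
        · apply mul_nonneg (mul_nonneg (mul_nonneg (by positivity) e5) e1) e2
        · exact mul_nonneg e6 e3
      · intro t ht
        have ts := Set.Ioo_subset_Icc_self ht
        have IHt := IH t ts
        have e1 : 0 ≤ d 1 t := hd1 t ts
        have e2 : 0 ≤ d (m - (k + 1)) t := hdk _ (by omega) (by omega) t ts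
        have e4 : 0 ≤ f t := (hf_pos t ts).le
        have e5 : 0 ≤ f t ^ k := pow_nonneg e4 k
        calc ((k + 1 + 1 : ℕ) : ℝ) * F t ^ (k + 1) * f t
            = ((k + 1 + 1 : ℕ) : ℝ) * (F t ^ (k + 1) * f t) := by ring
          _ ≤ ((k + 1 + 1 : ℕ) : ℝ) *
              ((q t * (((k + 1).factorial : ℝ) * (f t ^ k * d (m - k) t))) * f t) := by
              apply mul_le_mul_of_nonneg_left _ (by positivity)
              exact mul_le_mul_of_nonneg_right IHt e4
          _ = q t * (((k + 1 + 1).factorial : ℝ) * (f t ^ (k + 1) * d (m - k) t)) := by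
              rw [hfac]; push_cast; ring
          _ ≤ q t * (((k + 1 + 1).factorial : ℝ) *
              (((k + 1 : ℕ) : ℝ) * f t ^ k * d 1 t * d (m - (k + 1)) t +
                f t ^ (k + 1) * d (m - k) t)) := by
              apply mul_le_mul_of_nonneg_left _ (hqpos t ts).le
              apply mul_le_mul_of_nonneg_left _ (by positivity)
              exact le_add_of_nonneg_left
                (mul_nonneg (mul_nonneg (mul_nonneg (by positivity) e5) e1) e2)
      · show F a ^ (k + 1 + 1) ≤
            q a * (((k + 1 + 1).factorial : ℝ) * (f a ^ (k + 1) * d (m - (k + 1)) a))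
        rw [hFa, zero_pow (by omega)]
        apply mul_nonneg (hqpos a hamem).le
        apply mul_nonneg (by positivity)
        exact mul_nonneg (pow_nonneg hfa.le _) (hdk _ (by omega) (by omega) a hamem)
      · apply mul_nonneg (by positivity)
        exact mul_nonneg (pow_nonneg hfa.le _) (hdk _ (by omega) (by omega) a hamem)

  have S : ∀ x ∈ s, F x ^ m * f x ≤ q x * ((m.factorial : ℝ) * (f x ^ m * d 1 x)) := by
    rcases Nat.eq_zero_or_pos m with hm | hm
    · intro x hx
      have hh := hqg x hx
      simp only [hm, pow_zero, one_mul, Nat.factorial_zero, Nat.cast_one, zero_add] at hh ⊢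
      exact le_of_eq hh.symm
    · obtain ⟨j, rfl⟩ : ∃ j, m = j + 1 := ⟨m - 1, by omega⟩
      intro x hx
      have hT := T j (by omega) x hx
      rw [show j + 1 - j = 1 by omega] at hT
      calc F x ^ (j + 1) * f x
          ≤ (q x * (((j + 1).factorial : ℝ) * (f x ^ j * d 1 x))) * f x :=
            mul_le_mul_of_nonneg_right hT (hf_pos x hx).le
        _ = q x * (((j + 1).factorial : ℝ) * (f x ^ (j + 1) * d 1 x)) := by ring
  have D : ∀ x ∈ s, F x ^ (m + 1) ≤ q x * ((m.factorial : ℝ) * f x ^ (m + 1)) := by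
    refine aux_le a b q (fun t => F t ^ (m + 1)) (fun t => (m.factorial : ℝ) * f t ^ (m + 1))
      (fun t => ((m + 1 : ℕ) : ℝ) * F t ^ m * f t)
      (fun t => (m.factorial : ℝ) * (((m + 1 : ℕ) : ℝ) * f t ^ m * d 1 t))
      hqmono (hFc.pow _) (continuousOn_const.mul (hfc.pow _)) ?_ ?_ ?_ ?_ ?_ ?_
    · intro t ht
      have h := (hFd t ht).pow (m + 1)
      simp only [Nat.add_sub_cancel] at h; exact h
    · intro t ht
      have h := ((hder0 t ht).pow (m + 1)).const_mul ((m.factorial : ℝ))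
      simp only [Nat.add_sub_cancel] at h; exact h
    · intro t ht
      have ts := Set.Ioo_subset_Icc_self ht
      exact mul_nonneg (by positivity) (mul_nonneg
        (mul_nonneg (by positivity) (pow_nonneg (hf_pos t ts).le m)) (hd1 t ts))
    · intro t ht
      have ts := Set.Ioo_subset_Icc_self ht
      have hSt := S t ts
      calc ((m + 1 : ℕ) : ℝ) * F t ^ m * f t
          = ((m + 1 : ℕ) : ℝ) * (F t ^ m * f t) := by ring
        _ ≤ ((m + 1 : ℕ) : ℝ) * (q t * ((m.factorial : ℝ) * (f t ^ m * d 1 t))) :=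
            mul_le_mul_of_nonneg_left hSt (by positivity)
        _ = q t * ((m.factorial : ℝ) * (((m + 1 : ℕ) : ℝ) * f t ^ m * d 1 t)) := by
            push_cast; ring
    · show F a ^ (m + 1) ≤ q a * ((m.factorial : ℝ) * f a ^ (m + 1))
      rw [hFa, zero_pow (by omega)]
      exact mul_nonneg (hqpos a hamem).le (by positivity)
    · positivity
  have K : ∀ x ∈ s, F x ^ (m + 1) * f x ≤
      q x * ((m.factorial : ℝ) * (f x ^ (m + 2) - f a ^ (m + 2))) := by
    refine aux_le a b q (fun t => F t ^ (m + 1) * f t)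
      (fun t => (m.factorial : ℝ) * (f t ^ (m + 2) - f a ^ (m + 2)))
      (fun t => (((m + 1 : ℕ) : ℝ) * F t ^ m * f t) * f t + F t ^ (m + 1) * d 1 t)
      (fun t => (m.factorial : ℝ) * (((m + 2 : ℕ) : ℝ) * f t ^ (m + 1) * d 1 t))
      hqmono ((hFc.pow _).mul hfc)
      (continuousOn_const.mul ((hfc.pow _).sub continuousOn_const)) ?_ ?_ ?_ ?_ ?_ ?_
    · intro t ht
      have h := ((hFd t ht).pow (m + 1)).mul (hder0 t ht)
      simp only [Nat.add_sub_cancel] at h; exact h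
    · intro t ht
      have h := (((hder0 t ht).pow (m + 2)).sub_const (f a ^ (m + 2))).const_mul ((m.factorial : ℝ))
      simp only [show m + 2 - 1 = m + 1 by omega] at h; exact h
    · intro t ht
      have ts := Set.Ioo_subset_Icc_self ht
      exact mul_nonneg (by positivity) (mul_nonneg
        (mul_nonneg (by positivity) (pow_nonneg (hf_pos t ts).le _)) (hd1 t ts))
    · intro t ht
      have ts := Set.Ioo_subset_Icc_self ht
      have hSt := S t ts
      have hDt := D t ts
      have e1 : 0 ≤ d 1 t := hd1 t ts
      have e4 : 0 ≤ f t := (hf_pos t ts).le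
      have h1 : (((m + 1 : ℕ) : ℝ) * F t ^ m * f t) * f t ≤
          ((m + 1 : ℕ) : ℝ) * (q t * ((m.factorial : ℝ) * (f t ^ m * d 1 t))) * f t := by
        have hmul := mul_le_mul_of_nonneg_right
          (mul_le_mul_of_nonneg_left hSt (by positivity : (0:ℝ) ≤ ((m + 1 : ℕ) : ℝ))) e4
        calc (((m + 1 : ℕ) : ℝ) * F t ^ m * f t) * f t
            = ((m + 1 : ℕ) : ℝ) * (F t ^ m * f t) * f t := by ring
          _ ≤ _ := hmul
      have h2 : F t ^ (m + 1) * d 1 t ≤ q t * ((m.factorial : ℝ) * f t ^ (m + 1)) * d 1 t :=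
        mul_le_mul_of_nonneg_right hDt e1
      calc (((m + 1 : ℕ) : ℝ) * F t ^ m * f t) * f t + F t ^ (m + 1) * d 1 t
          ≤ ((m + 1 : ℕ) : ℝ) * (q t * ((m.factorial : ℝ) * (f t ^ m * d 1 t))) * f t +
            q t * ((m.factorial : ℝ) * f t ^ (m + 1)) * d 1 t := add_le_add h1 h2
        _ = q t * ((m.factorial : ℝ) * (((m + 2 : ℕ) : ℝ) * f t ^ (m + 1) * d 1 t)) := by
            push_cast; ring
    · show F a ^ (m + 1) * f a ≤ q a * ((m.factorial : ℝ) * (f a ^ (m + 2) - f a ^ (m + 2)))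
      rw [hFa, zero_pow (by omega)]
      simp
    · simp
  -- the comparison function
  obtain ⟨hGc, hGd⟩ := primitive (fun t => f t ^ (m + 3) / d (m + 1) t)
    ((hfc.pow _).div (hcont (m + 1) le_rfl) (fun x hx => ne_of_gt (hgpos x hx)))
  set G : ℝ → ℝ := fun x => ∫ t in a..x, f t ^ (m + 3) / d (m + 1) t with hG
  have hGa : G a = 0 := intervalIntegral.integral_same
  have hcoef : ∀ X Y : ℝ, (((m : ℝ) + 1) / (((m + 2).factorial : ℝ))) *
      (((m + 2 : ℕ) : ℝ) * X * Y) = X * Y / (m.factorial : ℝ) := by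
    intro X Y
    rw [show ((m + 2).factorial) = (m + 2) * ((m + 1) * m.factorial) by
      rw [Nat.factorial_succ, Nat.factorial_succ]]
    have h0 : (m.factorial : ℝ) ≠ 0 := by positivity
    push_cast
    field_simp
  set h : ℝ → ℝ := fun x => G x - (x - a) * (q a * f a ^ (m + 2)) -
    (((m : ℝ) + 1) / ((m + 2).factorial : ℝ)) * F x ^ (m + 2) with hh
  have hmh : MonotoneOn h s := by
    apply monotoneOn_of_deriv_nonneg (convex_Icc a b)
    · exact (hGc.sub ((continuousOn_id.sub continuousOn_const).mul continuousOn_const)).sub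
        (continuousOn_const.mul (hFc.pow _))
    · rw [interior_Icc]
      intro x hx
      have h2 : HasDerivAt (fun y => (y - a) * (q a * f a ^ (m + 2)))
          (q a * f a ^ (m + 2)) x := by
        simpa using ((hasDerivAt_id x).sub_const a).mul_const (q a * f a ^ (m + 2))
      exact (((hGd x hx).sub h2).sub
        (((hFd x hx).pow (m + 2)).const_mul
          (((m : ℝ) + 1) / ((m + 2).factorial : ℝ)))).differentiableAt.differentiableWithinAt
    · rw [interior_Icc]
      intro x hx
      have hxs := Set.Ioo_subset_Icc_self hx
      have h2 : HasDerivAt (fun y => (y - a) * (q a * f a ^ (m + 2)))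
          (q a * f a ^ (m + 2)) x := by
        simpa using ((hasDerivAt_id x).sub_const a).mul_const (q a * f a ^ (m + 2))
      have h3 := ((hFd x hx).pow (m + 2)).const_mul (((m : ℝ) + 1) / ((m + 2).factorial : ℝ))
      simp only [show m + 2 - 1 = m + 1 by omega] at h3
      have hD : HasDerivAt h (f x ^ (m + 3) / d (m + 1) x - q a * f a ^ (m + 2) -
          ((m : ℝ) + 1) / ((m + 2).factorial : ℝ) *
            (((m + 2 : ℕ) : ℝ) * F x ^ (m + 1) * f x)) x :=
        ((hGd x hx).sub h2).sub h3
      rw [hD.deriv]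
      have hK := K x hxs
      have hqa : q a ≤ q x := hqmono hamem hxs hx.1.le
      have hfan : (0 : ℝ) ≤ f a ^ (m + 2) := by positivity
      have heq : f x ^ (m + 3) / d (m + 1) x = q x * f x ^ (m + 2) := by
        rw [hq]
        field_simp [ne_of_gt (hgpos x hxs)]
        ring
      rw [heq, hcoef]
      have hKd : F x ^ (m + 1) * f x / (m.factorial : ℝ) ≤
          q x * (f x ^ (m + 2) - f a ^ (m + 2)) := by
        rw [div_le_iff₀ (by positivity : (0:ℝ) < (m.factorial : ℝ))]
        calc F x ^ (m + 1) * f x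
            ≤ q x * ((m.factorial : ℝ) * (f x ^ (m + 2) - f a ^ (m + 2))) := hK
          _ = q x * (f x ^ (m + 2) - f a ^ (m + 2)) * (m.factorial : ℝ) := by ring
      nlinarith [mul_le_mul_of_nonneg_right hqa hfan]
  have hha : h a = 0 := by
    rw [hh]
    simp [hGa, hFa, zero_pow (show m + 2 ≠ 0 by omega)]
  have key : (b - a) * (q a * f a ^ (m + 2)) +
      (((m : ℝ) + 1) / ((m + 2).factorial : ℝ)) * F b ^ (m + 2) ≤ G b := by
    have h0 := hmh hamem hbmem hab.le
    rw [hha] at h0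
    rw [hh] at h0
    simp only at h0
    linarith
  have eF : F b = ∫ x in a..b, f x := rfl
  have eG : G b = ∫ x in a..b, f x ^ (m + 3) / iteratedDerivWithin (m + 1) f s x := rfl
  have e1 : (b - a) * f a ^ (m + 3) / iteratedDerivWithin (m + 1) f s a =
      (b - a) * (q a * f a ^ (m + 2)) := by
    rw [hq]
    simp only [hd]
    field_simp [ne_of_gt (hgpos a hamem)]
    try ring
    try exact Or.inl trivial
  have e2 : ((↑(m + 2) : ℝ) - 1) = (m : ℝ) + 1 := by push_cast; ring
  rw [← eF, ← eG, e2, e1]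
  linarith
end

section
/- Let n ≥ 2, k ∈ {1,…,n-1}, and let f : [a,b] → ℝ be k-times differentiable with f⁽ⁱ⁾ ≥ 0 for i = 0,…,k-1. Let g : [a,b] → ℝ be continuous and increasing with g ≥ 0, and let h belong to D₊[a,b] or D₋[a,b] be increasing and strictly positive. Suppose f⁽ᵏ⁾(x) ≥ (x-a)^{n-k-1}·h(x)·(n-1)!/(n-k-1)! for all x ∈ [a,b]. Then (b-a)·f(a)^{n+1}·g(a)ⁿ·h(a)^{n-1} + (∫_a^b f·g·h)ⁿ ≤ ∫_a^b f^{n+1}·gⁿ·h^{n-1}. -/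
open Set Filter Topology MeasureTheory intervalIntegral


lemma aux_mono_right {a b : ℝ} {φ : ℝ → ℝ} (hc : ContinuousOn φ (Set.Icc a b))
    (hd : ∀ x ∈ Set.Ioo a b, ∃ L, 0 ≤ L ∧ HasDerivWithinAt φ L (Set.Ioi x) x) :
    MonotoneOn φ (Set.Icc a b) := by
  classical
  set B' : ℝ → ℝ := fun y => if hy : y ∈ Set.Ioo a b then (hd y hy).choose else 0 with hB'def
  have hB'nonneg : ∀ y, 0 ≤ B' y := by
    intro y
    by_cases hy : y ∈ Set.Ioo a b
    · simp only [hB'def, dif_pos hy]; exact (hd y hy).choose_spec.1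
    · simp only [hB'def, dif_neg hy]; exact le_rfl
  have hB'deriv : ∀ y ∈ Set.Ioo a b, HasDerivWithinAt φ (B' y) (Set.Ici y) y := by
    intro y hy
    have h2 := (hd y hy).choose_spec.2
    simp only [hB'def, dif_pos hy]
    exact h2.Ici_of_Ioi
  have key : ∀ c v : ℝ, a < c → c ≤ v → v ≤ b → φ c ≤ φ v := by
    intro c v hac hcv hvb
    have hsub : Set.Icc c v ⊆ Set.Icc a b := Set.Icc_subset_Icc hac.le hvb
    have := image_le_of_deriv_right_le_deriv_boundary
      (f := fun _ => φ c) (f' := fun _ => 0) (a := c) (b := v)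
      continuousOn_const (fun x _ => hasDerivWithinAt_const x _ _)
      le_rfl (hc.mono hsub)
      (fun x hx => hB'deriv x ⟨lt_of_lt_of_le hac hx.1, lt_of_lt_of_le hx.2 hvb⟩)
      (fun x _ => hB'nonneg x)
    exact this (Set.right_mem_Icc.2 hcv)
  intro u hu v hv huv
  rcases eq_or_lt_of_le huv with rfl | huv'
  · exact le_refl _
  rcases eq_or_lt_of_le hu.1 with rfl | hau
  · have hne : (𝓝[Set.Ioc a v] a).NeBot := by
      rw [nhdsWithin_Ioc_eq_nhdsGT huv']
      infer_instance
    have htend : Tendsto φ (𝓝[Set.Ioc a v] a) (𝓝 (φ a)) :=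
      (hc.continuousWithinAt hu).mono_left
        (nhdsWithin_mono _ (Set.Ioc_subset_Icc_self.trans (Set.Icc_subset_Icc le_rfl hv.2)))
    refine le_of_tendsto htend ?_
    filter_upwards [self_mem_nhdsWithin] with c hcx
    exact key c v hcx.1 hcx.2 hv.2
  · exact key u v hau huv hv.2

lemma aux_mono_left {a b : ℝ} {φ : ℝ → ℝ} (hc : ContinuousOn φ (Set.Icc a b))
    (hd : ∀ x ∈ Set.Ioo a b, ∃ L, 0 ≤ L ∧ HasDerivWithinAt φ L (Set.Iio x) x) :
    MonotoneOn φ (Set.Icc a b) := by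
  have hmaps : ∀ y ∈ Set.Icc (-b) (-a), -y ∈ Set.Icc a b := by
    intro y hy
    simp only [Set.mem_Icc] at hy ⊢
    constructor <;> linarith [hy.1, hy.2]
  have hψc : ContinuousOn (fun y => -φ (-y)) (Set.Icc (-b) (-a)) :=
    ContinuousOn.neg (hc.comp continuousOn_neg hmaps)
  have hψ : MonotoneOn (fun y => -φ (-y)) (Set.Icc (-b) (-a)) := by
    refine aux_mono_right hψc ?_
    intro y hy
    have hy' : -y ∈ Set.Ioo a b := by
      simp only [Set.mem_Ioo] at hy ⊢
      constructor <;> linarith [hy.1, hy.2]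
    obtain ⟨L, hL0, hL⟩ := hd (-y) hy'
    refine ⟨L, hL0, ?_⟩
    have hneg : HasDerivWithinAt (fun z : ℝ => -z) (-1) (Set.Ioi y) y :=
      (hasDerivAt_neg y).hasDerivWithinAt
    have hcomp : HasDerivWithinAt (fun z => φ (-z)) (L * (-1)) (Set.Ioi y) y := by
      refine HasDerivWithinAt.comp y hL hneg ?_
      intro z hz
      exact neg_lt_neg (Set.mem_Ioi.1 hz)
    have := hcomp.neg
    rw [mul_neg_one, neg_neg] at this
    exact this
  intro u hu v hv huv
  have h1 : -v ≤ -u := neg_le_neg huv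
  have := hψ (a := -v) ⟨neg_le_neg hv.2, neg_le_neg hv.1⟩ ⟨neg_le_neg hu.2, neg_le_neg hu.1⟩ h1
  simpa using this

lemma aux_mono_S {S : ℝ → Set ℝ} (hS : (∀ x, S x = Set.Ioi x) ∨ (∀ x, S x = Set.Iio x))
    {a b : ℝ} {φ : ℝ → ℝ} (hc : ContinuousOn φ (Set.Icc a b))
    (hd : ∀ x ∈ Set.Ioo a b, ∃ L, 0 ≤ L ∧ HasDerivWithinAt φ L (S x) x) :
    MonotoneOn φ (Set.Icc a b) := by
  rcases hS with hS | hS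
  · exact aux_mono_right hc (fun x hx => by rw [← hS x]; exact hd x hx)
  · exact aux_mono_left hc (fun x hx => by rw [← hS x]; exact hd x hx)

lemma aux_deriv_nonneg_S {S : ℝ → Set ℝ}
    (hS : (∀ x, S x = Set.Ioi x) ∨ (∀ x, S x = Set.Iio x))
    {a b x L : ℝ} {φ : ℝ → ℝ} (hx : x ∈ Set.Ioo a b)
    (hm : MonotoneOn φ (Set.Icc a b)) (hL : HasDerivWithinAt φ L (S x) x) : 0 ≤ L := by
  rcases hS with hS | hS
  · rw [hS x] at hL
    rw [hasDerivWithinAt_iff_tendsto_slope] at hL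
    rw [Set.diff_singleton_eq_self (fun hmem => lt_irrefl x (Set.mem_Ioi.1 hmem))] at hL
    refine ge_of_tendsto hL ?_
    filter_upwards [Ioo_mem_nhdsGT_of_mem (Set.mem_Ico.2 ⟨le_rfl, hx.2⟩)] with y hy
    have h1 : φ x ≤ φ y := hm ⟨hx.1.le, hx.2.le⟩ ⟨(hx.1.trans hy.1).le, hy.2.le⟩ hy.1.le
    rw [slope_def_field]
    exact div_nonneg (sub_nonneg.2 h1) (sub_pos.2 hy.1).le
  · rw [hS x] at hL
    rw [hasDerivWithinAt_iff_tendsto_slope] at hL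
    rw [Set.diff_singleton_eq_self (fun hmem => lt_irrefl x (Set.mem_Iio.1 hmem))] at hL
    refine ge_of_tendsto hL ?_
    filter_upwards [Ioo_mem_nhdsLT_of_mem (Set.mem_Ioc.2 ⟨hx.1, le_rfl⟩)] with y hy
    have h1 : φ y ≤ φ x := hm ⟨hy.1.le, (hy.2.trans hx.2).le⟩ ⟨hx.1.le, hx.2.le⟩ hy.2.le
    rw [slope_def_field]
    exact div_nonneg_of_nonpos (sub_nonpos.2 h1) (sub_nonpos.2 hy.2.le)

theorem main_aux (a b : ℝ) (hab : a < b) (n k : ℕ) (hn : 2 ≤ n)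
    (hk1 : 1 ≤ k) (hk2 : k ≤ n - 1)
    (f : ℝ → ℝ)
    (hf_diff : ∀ i < k,
      DifferentiableOn ℝ (iteratedDerivWithin i f (Set.Icc a b)) (Set.Icc a b))
    (hf_nonneg : ∀ i ≤ k - 1, ∀ x ∈ Set.Icc a b,
      0 ≤ iteratedDerivWithin i f (Set.Icc a b) x)
    (g : ℝ → ℝ) (hg_cont : ContinuousOn g (Set.Icc a b))
    (hg_mono : MonotoneOn g (Set.Icc a b))
    (hg_nonneg : ∀ x ∈ Set.Icc a b, 0 ≤ g x)
    (h : ℝ → ℝ)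
    (S : ℝ → Set ℝ) (hS : (∀ x, S x = Set.Ioi x) ∨ (∀ x, S x = Set.Iio x))
    (hh_cont : ContinuousOn h (Set.Icc a b))
    (hh_deriv : ∀ x ∈ Set.Ioo a b, ∃ L : ℝ, HasDerivWithinAt h L (S x) x)
    (hh_mono : MonotoneOn h (Set.Icc a b))
    (hh_pos : ∀ x ∈ Set.Icc a b, 0 < h x)
    (hgrowth : ∀ x ∈ Set.Icc a b,
      (x - a) ^ (n - k - 1) * h x * ((n - 1).factorial : ℝ) / ((n - k - 1).factorial : ℝ) ≤
        iteratedDerivWithin k f (Set.Icc a b) x) :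
    (b - a) * f a ^ (n + 1) * g a ^ n * h a ^ (n - 1) +
      (∫ x in a..b, f x * g x * h x) ^ n ≤
    ∫ x in a..b, f x ^ (n + 1) * g x ^ n * h x ^ (n - 1) := by
  obtain ⟨p, rfl⟩ : ∃ p, n = p + 2 := ⟨n - 2, by omega⟩
  have hkp : k ≤ p + 1 := by omega
  have hI : UniqueDiffOn ℝ (Set.Icc a b) := uniqueDiffOn_Icc hab
  set d : ℕ → ℝ → ℝ := fun j => iteratedDerivWithin j f (Set.Icc a b) with hd_def
  have hd0 : d 0 = f := iteratedDerivWithin_zero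
  -- rewrite growth hypothesis
  have ek : p + 2 - k - 1 = p + 1 - k := by omega
  have e2 : p + 2 - 1 = p + 1 := rfl
  rw [ek, e2] at hgrowth
  -- basic facts about f and its derivatives
  have hfc : ContinuousOn f (Set.Icc a b) := by
    have := (hf_diff 0 (by omega)).continuousOn
    rwa [iteratedDerivWithin_zero] at this
  have hdjc : ∀ j < k, ContinuousOn (d j) (Set.Icc a b) := fun j hj =>
    (hf_diff j hj).continuousOn
  have hder : ∀ j, j < k → ∀ x ∈ Set.Icc a b,
      HasDerivWithinAt (d j) (d (j+1) x) (Set.Icc a b) x := by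
    intro j hj x hx
    have h1 := (hf_diff j hj x hx).hasDerivWithinAt
    have h2 : d (j+1) x = derivWithin (d j) (Set.Icc a b) x :=
      congrFun iteratedDerivWithin_succ x
    rw [h2]
    exact h1
  have hdf : ∀ x ∈ Set.Icc a b, HasDerivWithinAt f (d 1 x) (Set.Icc a b) x := by
    intro x hx
    have := hder 0 (by omega) x hx
    rwa [hd0] at this
  have hfnn : ∀ x ∈ Set.Icc a b, 0 ≤ f x := by
    intro x hx
    have := hf_nonneg 0 (Nat.zero_le _) x hx
    rwa [iteratedDerivWithin_zero] at this
  have hdjnn : ∀ j, j < k → ∀ x ∈ Set.Icc a b, 0 ≤ d j x := by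
    intro j hj x hx
    rcases Nat.eq_zero_or_pos j with rfl | _
    · rw [hd0]; exact hfnn x hx
    · exact hf_nonneg j (by omega) x hx
  have hd1nn : ∀ x ∈ Set.Icc a b, 0 ≤ d 1 x := by
    intro x hx
    rcases eq_or_lt_of_le hk1 with rfl | hk'
    · refine le_trans ?_ (hgrowth x hx)
      apply div_nonneg _ (Nat.cast_nonneg _)
      exact mul_nonneg (mul_nonneg (pow_nonneg (sub_nonneg.2 hx.1) _) (hh_pos x hx).le)
        (Nat.cast_nonneg _)
    · exact hf_nonneg 1 (by omega) x hx
  -- restriction of within-Icc derivatives to the one-sided set S x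
  have hrestrict : ∀ (φ : ℝ → ℝ) (L x : ℝ), x ∈ Set.Ioo a b →
      HasDerivWithinAt φ L (Set.Icc a b) x → HasDerivWithinAt φ L (S x) x := by
    intro φ L x hx hL
    exact hL.mono_of_mem_nhdsWithin (mem_nhdsWithin_of_mem_nhds (Icc_mem_nhds hx.1 hx.2))
  have hmemIcc : ∀ x ∈ Set.Ioo a b, x ∈ Set.Icc a b := fun x hx => Ioo_subset_Icc_self hx
  -- f is monotone
  have hfm : MonotoneOn f (Set.Icc a b) := by
    refine aux_mono_S hS hfc ?_
    intro x hx
    exact ⟨d 1 x, hd1nn x (hmemIcc x hx), hrestrict f _ x hx (hdf x (hmemIcc x hx))⟩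
  -- h derivative with sign
  have hhL : ∀ x ∈ Set.Ioo a b, ∃ L, 0 ≤ L ∧ HasDerivWithinAt h L (S x) x := by
    intro x hx
    obtain ⟨L, hL⟩ := hh_deriv x hx
    exact ⟨L, aux_deriv_nonneg_S hS hx hh_mono hL, hL⟩
  -- integrability helper
  have hintsub : ∀ (u : ℝ → ℝ), ContinuousOn u (Set.Icc a b) → ∀ x ∈ Set.Icc a b,
      IntervalIntegrable u volume a x := by
    intro u hu x hx
    apply ContinuousOn.intervalIntegrable
    rw [Set.uIcc_of_le hx.1]
    exact hu.mono (Set.Icc_subset_Icc le_rfl hx.2)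
  -- the function E
  have hfh_cont : ContinuousOn (fun s => f s * h s) (Set.Icc a b) := hfc.mul hh_cont
  set E : ℝ → ℝ := fun t => ∫ s in a..t, f s * h s with hE_def
  have hE_cont : ContinuousOn E (Set.Icc a b) := by
    have h1 : IntegrableOn (fun s => f s * h s) (Set.uIcc a b) volume := by
      rw [Set.uIcc_of_le hab.le]; exact hfh_cont.integrableOn_Icc
    have := intervalIntegral.continuousOn_primitive_interval (μ := volume) h1
    rwa [Set.uIcc_of_le hab.le] at this
  have hE0 : E a = 0 := intervalIntegral.integral_same
  have hEnn : ∀ x ∈ Set.Icc a b, 0 ≤ E x := by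
    intro x hx
    refine intervalIntegral.integral_nonneg hx.1 ?_
    intro s hs
    have hs' : s ∈ Set.Icc a b := ⟨hs.1, hs.2.trans hx.2⟩
    exact mul_nonneg (hfnn s hs') (hh_pos s hs').le
  have hE_deriv : ∀ x ∈ Set.Ioo a b, HasDerivAt E (f x * h x) x := by
    intro x hx
    have hx' := hmemIcc x hx
    exact intervalIntegral.integral_hasDerivAt_right (hintsub _ hfh_cont x hx')
      (ContinuousOn.stronglyMeasurableAtFilter isOpen_Ioo
        (hfh_cont.mono Ioo_subset_Icc_self) x hx)
      ((hfh_cont.mono Ioo_subset_Icc_self).continuousAt (Ioo_mem_nhds hx.1 hx.2))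
  have hE_le : ∀ x ∈ Set.Icc a b, E x ≤ (x - a) * (f x * h x) := by
    intro x hx
    have h1 : ∀ s ∈ Set.Icc a x, f s * h s ≤ f x * h x := by
      intro s hs
      have hs' : s ∈ Set.Icc a b := ⟨hs.1, hs.2.trans hx.2⟩
      exact mul_le_mul (hfm hs' hx hs.2) (hh_mono hs' hx hs.2) (hh_pos s hs').le
        (hfnn x hx)
    have h2 := intervalIntegral.integral_mono_on (μ := volume) hx.1
      (hintsub _ hfh_cont x hx) (intervalIntegrable_const) h1
    rw [intervalIntegral.integral_const] at h2
    simpa [smul_eq_mul] using h2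
  -- the coefficients
  set cc : ℕ → ℝ := fun j => ((p+1).factorial : ℝ) / ((p + 1 - j).factorial : ℝ) with hcc_def
  have hccnn : ∀ j, 0 ≤ cc j := fun j =>
    div_nonneg (Nat.cast_nonneg _) (Nat.cast_nonneg _)
  -- Base case 1 : j = k, when k ≤ p
  have B1 : k ≤ p → ∀ x ∈ Set.Icc a b,
      cc k * E x ^ (p + 1 - k) ≤ f x ^ (p + 1 - k) * d k x * h x ^ (p - k) := by
    intro hkp' x hx
    obtain ⟨q, hq1, hq2⟩ : ∃ q, p + 1 - k = q + 1 ∧ p - k = q := ⟨p - k, by omega, rfl⟩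
    rw [hq1, hq2]
    rw [hq1] at hgrowth
    have h1 : E x ^ (q+1) ≤ ((x - a) * (f x * h x)) ^ (q+1) :=
      pow_le_pow_left₀ (hEnn x hx) (hE_le x hx) _
    have hgr := hgrowth x hx
    have hgrnn : (0:ℝ) ≤ (x - a) ^ (q+1) * h x * ((p + 1).factorial : ℝ) /
        ((q + 1).factorial : ℝ) :=
      div_nonneg (mul_nonneg (mul_nonneg (pow_nonneg (sub_nonneg.2 hx.1) _)
        (hh_pos x hx).le) (Nat.cast_nonneg _)) (Nat.cast_nonneg _)
    calc cc k * E x ^ (q+1) ≤ cc k * ((x - a) * (f x * h x)) ^ (q+1) := by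
          exact mul_le_mul_of_nonneg_left h1 (hccnn k)
      _ = ((x - a) ^ (q+1) * h x * ((p + 1).factorial : ℝ) / ((q + 1).factorial : ℝ)) *
            (f x ^ (q+1) * h x ^ q) := by
          rw [hcc_def]; simp only [hq1]
          rw [mul_pow, mul_pow]
          ring
      _ ≤ d k x * (f x ^ (q+1) * h x ^ q) := by
          refine mul_le_mul_of_nonneg_right hgr ?_
          exact mul_nonneg (pow_nonneg (hfnn x hx) _) (pow_nonneg (hh_pos x hx).le _)
      _ = f x ^ (q+1) * d k x * h x ^ q := by ring
  -- Base case 2 : k = p + 1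
  have B2 : k = p + 1 → ∀ x ∈ Set.Icc a b, cc p * E x ≤ f x * d p x := by
    intro hk x hx
    subst hk
    have hccp : cc p = ((p+1).factorial : ℝ) := by
      rw [hcc_def]; simp
    have hgr' : ∀ y ∈ Set.Icc a b, ((p+1).factorial : ℝ) * h y ≤ d (p+1) y := by
      intro y hy
      have := hgrowth y hy
      simp only [show p + 1 - (p + 1) = 0 from by omega, pow_zero, Nat.factorial_zero,
        Nat.cast_one, div_one, one_mul] at this
      linarith
    set Ψ : ℝ → ℝ := fun y => f y * d p y - cc p * E y with hΨ_def
    have hΨc : ContinuousOn Ψ (Set.Icc a b) :=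
      (hfc.mul (hdjc p (by omega))).sub (continuousOn_const.mul hE_cont)
    have hΨm : MonotoneOn Ψ (Set.Icc a b) := by
      refine aux_mono_S hS hΨc ?_
      intro x' hx'
      have hx'' := hmemIcc x' hx'
      have u1 : HasDerivWithinAt (fun y => f y * d p y)
          (d 1 x' * d p x' + f x' * d (p+1) x') (S x') x' :=
        (hrestrict f _ x' hx' (hdf x' hx'')).mul
          (hrestrict (d p) _ x' hx' (hder p (by omega) x' hx''))
      have u2 : HasDerivWithinAt (fun y => cc p * E y) (cc p * (f x' * h x')) (S x') x' :=
        ((hE_deriv x' hx').hasDerivWithinAt).const_mul _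
      refine ⟨_, ?_, u1.sub u2⟩
      have q1 : 0 ≤ d 1 x' * d p x' :=
        mul_nonneg (hd1nn x' hx'') (hdjnn p (by omega) x' hx'')
      have q2 : cc p * (f x' * h x') ≤ f x' * d (p+1) x' := by
        rw [hccp]
        calc ((p+1).factorial : ℝ) * (f x' * h x')
            = f x' * (((p+1).factorial : ℝ) * h x') := by ring
          _ ≤ f x' * d (p+1) x' :=
              mul_le_mul_of_nonneg_left (hgr' x' hx'') (hfnn x' hx'')
      linarith
    have h1 : Ψ a ≤ Ψ x := hΨm ⟨le_rfl, hab.le⟩ hx hx.1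
    have h2 : (0:ℝ) ≤ Ψ a := by
      simp only [hΨ_def, hE0, mul_zero, sub_zero]
      exact mul_nonneg (hfnn a ⟨le_rfl, hab.le⟩) (hdjnn p (by omega) a ⟨le_rfl, hab.le⟩)
    have h0 : (0:ℝ) ≤ Ψ x := le_trans h2 h1
    simp only [hΨ_def] at h0
    linarith
  -- inductive step
  have STEP : ∀ j r : ℕ, 1 ≤ j → j + 1 ≤ k → p = j + r + 1 →
      (∀ x ∈ Set.Icc a b, cc (j+1) * E x ^ (r+1) ≤ f x ^ (r+1) * d (j+1) x * h x ^ r) →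
      ∀ x ∈ Set.Icc a b, cc j * E x ^ (r+2) ≤ f x ^ (r+2) * d j x * h x ^ (r+1) := by
    intro j r hj1 hjk hpr IH
    have hccrel : cc j * ((r:ℝ)+2) = cc (j+1) := by
      simp only [hcc_def]
      rw [show p + 1 - j = r + 2 by omega, show p + 1 - (j+1) = r + 1 by omega]
      rw [show (r+2).factorial = (r+2) * (r+1).factorial from Nat.factorial_succ (r+1)]
      have hpos : ((r+1).factorial : ℝ) ≠ 0 := by positivity
      push_cast
      field_simp
    set Ψ : ℝ → ℝ := fun y => f y ^ (r+2) * d j y * h y ^ (r+1) - cc j * E y ^ (r+2) with hΨ_def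
    have hΨc : ContinuousOn Ψ (Set.Icc a b) :=
      (((hfc.pow _).mul (hdjc j (by omega))).mul (hh_cont.pow _)).sub
        (continuousOn_const.mul (hE_cont.pow _))
    have hΨm : MonotoneOn Ψ (Set.Icc a b) := by
      refine aux_mono_S hS hΨc ?_
      intro x hx
      have hx' := hmemIcc x hx
      obtain ⟨L, hL0, hLd⟩ := hhL x hx
      have u1 := ((hrestrict f _ x hx (hdf x hx')).pow (r+2)).mul
        (hrestrict (d j) _ x hx (hder j (by omega) x hx'))
      have u2 := u1.mul (hLd.pow (r+1))
      have u3 := (((hE_deriv x hx).hasDerivWithinAt (s := S x)).pow (r+2)).const_mul (cc j)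
      refine ⟨_, ?_, u2.sub u3⟩
      simp only [show r + 2 - 1 = r + 1 from rfl, show r + 1 - 1 = r from rfl]
      have e1 : 0 ≤ ((r+2:ℕ):ℝ) * f x ^ (r+1) * d 1 x * d j x * h x ^ (r+1) :=
        mul_nonneg (mul_nonneg (mul_nonneg (mul_nonneg (Nat.cast_nonneg _)
          (pow_nonneg (hfnn x hx') _)) (hd1nn x hx')) (hdjnn j (by omega) x hx'))
          (pow_nonneg (hh_pos x hx').le _)
      have e3 : 0 ≤ f x ^ (r+2) * d j x * (((r+1:ℕ):ℝ) * h x ^ r * L) :=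
        mul_nonneg (mul_nonneg (pow_nonneg (hfnn x hx') _) (hdjnn j (by omega) x hx'))
          (mul_nonneg (mul_nonneg (Nat.cast_nonneg _) (pow_nonneg (hh_pos x hx').le _)) hL0)
      have key2 : cc j * (((r+2:ℕ):ℝ) * E x ^ (r+1) * (f x * h x)) ≤
          f x ^ (r+2) * d (j+1) x * h x ^ (r+1) := by
        have hIH := IH x hx'
        have hmul := mul_le_mul_of_nonneg_right hIH
          (mul_nonneg (hfnn x hx') (hh_pos x hx').le)
        calc cc j * (((r+2:ℕ):ℝ) * E x ^ (r+1) * (f x * h x))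
            = (cc j * ((r:ℝ)+2)) * E x ^ (r+1) * (f x * h x) := by push_cast; ring
          _ = cc (j+1) * E x ^ (r+1) * (f x * h x) := by rw [hccrel]
          _ ≤ f x ^ (r+1) * d (j+1) x * h x ^ r * (f x * h x) := hmul
          _ = f x ^ (r+2) * d (j+1) x * h x ^ (r+1) := by ring
      have expand : (((r+2:ℕ):ℝ) * f x ^ (r+1) * d 1 x * d j x
            + f x ^ (r+2) * d (j+1) x) * h x ^ (r+1)
          = ((r+2:ℕ):ℝ) * f x ^ (r+1) * d 1 x * d j x * h x ^ (r+1)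
            + f x ^ (r+2) * d (j+1) x * h x ^ (r+1) := by ring
      simp only [Pi.pow_apply, Pi.mul_apply]
      rw [expand]
      linarith
    intro x hx
    have h1 : Ψ a ≤ Ψ x := hΨm ⟨le_rfl, hab.le⟩ hx hx.1
    have h2 : (0:ℝ) ≤ Ψ a := by
      simp only [hΨ_def, hE0, zero_pow (by omega : r + 2 ≠ 0), mul_zero, sub_zero]
      exact mul_nonneg (mul_nonneg (pow_nonneg (hfnn a ⟨le_rfl, hab.le⟩) _)
        (hdjnn j (by omega) a ⟨le_rfl, hab.le⟩)) (pow_nonneg (hh_pos a ⟨le_rfl, hab.le⟩).le _)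
    have h0 : (0:ℝ) ≤ Ψ x := le_trans h2 h1
    simp only [hΨ_def] at h0
    linarith
  -- the chain of inequalities
  have chain : ∀ m j : ℕ, 1 ≤ j → j ≤ k → j ≤ p → p - j ≤ m →
      ∀ x ∈ Set.Icc a b,
        cc j * E x ^ (p + 1 - j) ≤ f x ^ (p + 1 - j) * d j x * h x ^ (p - j) := by
    intro m
    induction m with
    | zero =>
      intro j hj1 hjk hjp hm x hx
      have hjp' : j = p := by omega
      rcases eq_or_lt_of_le hjk with rfl | hlt
      · exact B1 (by omega) x hx
      · have hk : k = p + 1 := by omega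
        have hB := B2 hk x hx
        rw [hjp', show p + 1 - p = 1 from by omega, show p - p = 0 from by omega,
          pow_one, pow_one, pow_zero, mul_one]
        exact hB
    | succ m ih =>
      intro j hj1 hjk hjp hm x hx
      by_cases hc1 : p - j ≤ m
      · exact ih j hj1 hjk hjp hc1 x hx
      · have hpj : p - j = m + 1 := by omega
        rcases eq_or_lt_of_le hjk with rfl | hlt
        · exact B1 (by omega) x hx
        · have hr : p = j + m + 1 := by omega
          have IH := ih (j+1) (by omega) (by omega) (by omega) (by omega)
          have IH' : ∀ y ∈ Set.Icc a b,
              cc (j+1) * E y ^ (m+1) ≤ f y ^ (m+1) * d (j+1) y * h y ^ m := by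
            intro y hy
            have := IH y hy
            rwa [show p + 1 - (j+1) = m + 1 from by omega,
              show p - (j+1) = m from by omega] at this
          have := STEP j m hj1 (by omega) hr IH' x hx
          rwa [show p + 1 - j = m + 2 from by omega, show p - j = m + 1 from by omega]
  -- the key pointwise inequality
  have KEY : ∀ x ∈ Set.Icc a b,
      ((p+1:ℕ):ℝ) * E x ^ p * h x ≤ f x ^ p * d 1 x * h x ^ p := by
    rcases Nat.eq_zero_or_pos p with rfl | hp
    · intro x hx
      have hk : k = 1 := by omega
      subst hk
      have hgr := hgrowth x hx
      have hgr' : h x ≤ d 1 x := by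
        have e : (x - a) ^ (0 + 1 - 1) * h x * (((0+1).factorial : ℕ) : ℝ) /
            (((0+1-1).factorial : ℕ) : ℝ) = h x := by norm_num
        rw [e] at hgr
        exact hgr
      simp only [pow_zero, one_mul, mul_one]
      calc ((0+1:ℕ):ℝ) * h x = h x := by norm_num
        _ ≤ d 1 x := hgr'
    · obtain ⟨r, rfl⟩ : ∃ r, p = r + 1 := ⟨p - 1, by omega⟩
      intro x hx
      have hch := chain (r+1) 1 le_rfl hk1 (by omega) (by omega) x hx
      rw [show r + 1 + 1 - 1 = r + 1 from rfl, show r + 1 - 1 = r from rfl] at hch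
      have hcc1 : cc 1 = ((r:ℝ) + 2) := by
        simp only [hcc_def]
        rw [show r + 1 + 1 - 1 = r + 1 from rfl,
          show (r+1+1).factorial = (r+2) * (r+1).factorial from Nat.factorial_succ (r+1)]
        have hpos : ((r+1).factorial : ℝ) ≠ 0 := by positivity
        push_cast
        field_simp
      rw [hcc1] at hch
      have hmul := mul_le_mul_of_nonneg_right hch (hh_pos x hx).le
      calc ((r+1+1:ℕ):ℝ) * E x ^ (r+1) * h x
          = ((r:ℝ)+2) * E x ^ (r+1) * h x := by push_cast; ring
        _ ≤ f x ^ (r+1) * d 1 x * h x ^ r * h x := hmul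
        _ = f x ^ (r+1) * d 1 x * h x ^ (r+1) := by ring
  -- the main intermediate inequality
  have haI : a ∈ Set.Icc a b := ⟨le_rfl, hab.le⟩
  have PP : ∀ x ∈ Set.Icc a b,
      ((p+2:ℕ):ℝ) * E x ^ (p+1) ≤ (f x ^ (p+2) - f a ^ (p+2)) * h x ^ p := by
    set Ψ : ℝ → ℝ := fun y =>
      (f y ^ (p+2) - f a ^ (p+2)) * h y ^ p - ((p+2:ℕ):ℝ) * E y ^ (p+1) with hΨ_def
    have hΨc : ContinuousOn Ψ (Set.Icc a b) :=
      (((hfc.pow _).sub continuousOn_const).mul (hh_cont.pow _)).sub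
        (continuousOn_const.mul (hE_cont.pow _))
    have hΨm : MonotoneOn Ψ (Set.Icc a b) := by
      refine aux_mono_S hS hΨc ?_
      intro x hx
      have hx' := hmemIcc x hx
      obtain ⟨L, hL0, hLd⟩ := hhL x hx
      have u1 := (((hrestrict f _ x hx (hdf x hx')).pow (p+2)).sub_const (f a ^ (p+2))).mul
        (hLd.pow p)
      have u3 := (((hE_deriv x hx).hasDerivWithinAt (s := S x)).pow (p+1)).const_mul
        ((p+2:ℕ):ℝ)
      refine ⟨_, ?_, u1.sub u3⟩
      simp only [show p + 2 - 1 = p + 1 from rfl, show p + 1 - 1 = p from rfl]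
      have w1 : 0 ≤ (f x ^ (p+2) - f a ^ (p+2)) * ((p:ℝ) * h x ^ (p-1) * L) := by
        apply mul_nonneg
        · have hle : f a ≤ f x := hfm haI hx' hx'.1
          have := pow_le_pow_left₀ (hfnn a haI) hle (p+2)
          linarith
        · exact mul_nonneg (mul_nonneg (Nat.cast_nonneg _)
            (pow_nonneg (hh_pos x hx').le _)) hL0
      have w2 : ((p+2:ℕ):ℝ) * (((p+1:ℕ):ℝ) * E x ^ p * (f x * h x)) ≤
          ((p+2:ℕ):ℝ) * f x ^ (p+1) * d 1 x * h x ^ p := by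
        have hk' := KEY x hx'
        have hmul := mul_le_mul_of_nonneg_left hk'
          (mul_nonneg (Nat.cast_nonneg (α := ℝ) (p+2)) (hfnn x hx'))
        calc ((p+2:ℕ):ℝ) * (((p+1:ℕ):ℝ) * E x ^ p * (f x * h x))
            = (((p+2:ℕ):ℝ) * f x) * (((p+1:ℕ):ℝ) * E x ^ p * h x) := by ring
          _ ≤ (((p+2:ℕ):ℝ) * f x) * (f x ^ p * d 1 x * h x ^ p) := hmul
          _ = ((p+2:ℕ):ℝ) * f x ^ (p+1) * d 1 x * h x ^ p := by ring
      simp only [Pi.pow_apply]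
      linarith
    intro x hx
    have h1 : Ψ a ≤ Ψ x := hΨm haI hx hx.1
    have h2 : (0:ℝ) ≤ Ψ a := by
      simp only [hΨ_def, hE0, zero_pow (by omega : p + 1 ≠ 0), mul_zero, sub_zero, sub_self,
        zero_mul]
      exact le_rfl
    have h0 : (0:ℝ) ≤ Ψ x := le_trans h2 h1
    simp only [hΨ_def] at h0
    linarith
  -- the functions F and G
  have hfgh_cont : ContinuousOn (fun s => f s * g s * h s) (Set.Icc a b) :=
    (hfc.mul hg_cont).mul hh_cont
  have hbig_cont : ContinuousOn (fun s => f s ^ (p+3) * g s ^ (p+2) * h s ^ (p+1))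
      (Set.Icc a b) := ((hfc.pow _).mul (hg_cont.pow _)).mul (hh_cont.pow _)
  set F : ℝ → ℝ := fun t => ∫ s in a..t, f s * g s * h s with hF_def
  set G : ℝ → ℝ := fun t => ∫ s in a..t, f s ^ (p+3) * g s ^ (p+2) * h s ^ (p+1) with hG_def
  have hF_cont : ContinuousOn F (Set.Icc a b) := by
    have h1 : IntegrableOn (fun s => f s * g s * h s) (Set.uIcc a b) volume := by
      rw [Set.uIcc_of_le hab.le]; exact hfgh_cont.integrableOn_Icc
    have := intervalIntegral.continuousOn_primitive_interval (μ := volume) h1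
    rwa [Set.uIcc_of_le hab.le] at this
  have hG_cont : ContinuousOn G (Set.Icc a b) := by
    have h1 : IntegrableOn (fun s => f s ^ (p+3) * g s ^ (p+2) * h s ^ (p+1))
        (Set.uIcc a b) volume := by
      rw [Set.uIcc_of_le hab.le]; exact hbig_cont.integrableOn_Icc
    have := intervalIntegral.continuousOn_primitive_interval (μ := volume) h1
    rwa [Set.uIcc_of_le hab.le] at this
  have hF0 : F a = 0 := intervalIntegral.integral_same
  have hG0 : G a = 0 := intervalIntegral.integral_same
  have hFnn : ∀ x ∈ Set.Icc a b, 0 ≤ F x := by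
    intro x hx
    refine intervalIntegral.integral_nonneg hx.1 ?_
    intro s hs
    have hs' : s ∈ Set.Icc a b := ⟨hs.1, hs.2.trans hx.2⟩
    exact mul_nonneg (mul_nonneg (hfnn s hs') (hg_nonneg s hs')) (hh_pos s hs').le
  have hF_deriv : ∀ x ∈ Set.Ioo a b, HasDerivAt F (f x * g x * h x) x := by
    intro x hx
    exact intervalIntegral.integral_hasDerivAt_right (hintsub _ hfgh_cont x (hmemIcc x hx))
      (ContinuousOn.stronglyMeasurableAtFilter isOpen_Ioo
        (hfgh_cont.mono Ioo_subset_Icc_self) x hx)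
      ((hfgh_cont.mono Ioo_subset_Icc_self).continuousAt (Ioo_mem_nhds hx.1 hx.2))
  have hG_deriv : ∀ x ∈ Set.Ioo a b,
      HasDerivAt G (f x ^ (p+3) * g x ^ (p+2) * h x ^ (p+1)) x := by
    intro x hx
    exact intervalIntegral.integral_hasDerivAt_right (hintsub _ hbig_cont x (hmemIcc x hx))
      (ContinuousOn.stronglyMeasurableAtFilter isOpen_Ioo
        (hbig_cont.mono Ioo_subset_Icc_self) x hx)
      ((hbig_cont.mono Ioo_subset_Icc_self).continuousAt (Ioo_mem_nhds hx.1 hx.2))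
  have hF_le : ∀ x ∈ Set.Icc a b, F x ≤ g x * E x := by
    intro x hx
    have h1 : ∀ s ∈ Set.Icc a x, f s * g s * h s ≤ g x * (f s * h s) := by
      intro s hs
      have hs' : s ∈ Set.Icc a b := ⟨hs.1, hs.2.trans hx.2⟩
      have hgle := hg_mono hs' hx hs.2
      calc f s * g s * h s = g s * (f s * h s) := by ring
        _ ≤ g x * (f s * h s) := mul_le_mul_of_nonneg_right hgle
            (mul_nonneg (hfnn s hs') (hh_pos s hs').le)
    have h2 := intervalIntegral.integral_mono_on (μ := volume) hx.1
      (hintsub _ hfgh_cont x hx) ((hintsub _ hfh_cont x hx).const_mul (g x)) h1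
    rwa [intervalIntegral.integral_const_mul] at h2
  -- the final function Φ
  set C : ℝ := f a ^ (p+3) * g a ^ (p+2) * h a ^ (p+1) with hC_def
  set Φ : ℝ → ℝ := fun t => G t - (t - a) * C - F t ^ (p+2) with hΦ_def
  have hΦc : ContinuousOn Φ (Set.Icc a b) :=
    (hG_cont.sub ((continuousOn_id.sub continuousOn_const).mul continuousOn_const)).sub
      (hF_cont.pow _)
  have hΦm : MonotoneOn Φ (Set.Icc a b) := by
    refine aux_mono_S hS hΦc ?_
    intro x hx
    have hx' := hmemIcc x hx
    have u1 : HasDerivWithinAt G (f x ^ (p+3) * g x ^ (p+2) * h x ^ (p+1)) (S x) x :=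
      (hG_deriv x hx).hasDerivWithinAt
    have u2 : HasDerivWithinAt (fun t : ℝ => (t - a) * C) (1 * C) (S x) x :=
      (((hasDerivAt_id x).sub_const a).mul_const C).hasDerivWithinAt
    have u3 := (((hF_deriv x hx).hasDerivWithinAt (s := S x)).pow (p+2))
    refine ⟨_, ?_, (u1.sub u2).sub u3⟩
    simp only [show p + 2 - 1 = p + 1 from rfl]
    have hgx := hg_nonneg x hx'
    have hhx := (hh_pos x hx').le
    have hfx := hfnn x hx'
    have w2 : ((p+2:ℕ):ℝ) * F x ^ (p+1) * (f x * g x * h x) ≤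
        ((p+2:ℕ):ℝ) * (g x * E x) ^ (p+1) * (f x * g x * h x) := by
      refine mul_le_mul_of_nonneg_right (mul_le_mul_of_nonneg_left ?_ (Nat.cast_nonneg _)) ?_
      · exact pow_le_pow_left₀ (hFnn x hx') (hF_le x hx') _
      · exact mul_nonneg (mul_nonneg hfx hgx) hhx
    have w3 : ((p+2:ℕ):ℝ) * (g x * E x) ^ (p+1) * (f x * g x * h x)
        = (((p+2:ℕ):ℝ) * E x ^ (p+1)) * (f x * h x * g x ^ (p+2)) := by ring
    have w4 : (((p+2:ℕ):ℝ) * E x ^ (p+1)) * (f x * h x * g x ^ (p+2)) ≤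
        ((f x ^ (p+2) - f a ^ (p+2)) * h x ^ p) * (f x * h x * g x ^ (p+2)) := by
      refine mul_le_mul_of_nonneg_right (PP x hx') ?_
      exact mul_nonneg (mul_nonneg hfx hhx) (pow_nonneg hgx _)
    have w5 : ((f x ^ (p+2) - f a ^ (p+2)) * h x ^ p) * (f x * h x * g x ^ (p+2))
        = f x ^ (p+3) * g x ^ (p+2) * h x ^ (p+1)
          - f a ^ (p+2) * (f x * g x ^ (p+2) * h x ^ (p+1)) := by ring
    have w6 : f a * g a ^ (p+2) * h a ^ (p+1) ≤ f x * g x ^ (p+2) * h x ^ (p+1) := by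
      have t1 : f a ≤ f x := hfm haI hx' hx'.1
      have t2 : g a ^ (p+2) ≤ g x ^ (p+2) :=
        pow_le_pow_left₀ (hg_nonneg a haI) (hg_mono haI hx' hx'.1) _
      have t3 : h a ^ (p+1) ≤ h x ^ (p+1) :=
        pow_le_pow_left₀ (hh_pos a haI).le (hh_mono haI hx' hx'.1) _
      have s1 : f a * g a ^ (p+2) ≤ f x * g x ^ (p+2) :=
        mul_le_mul t1 t2 (pow_nonneg (hg_nonneg a haI) _) hfx
      exact mul_le_mul s1 t3 (pow_nonneg (hh_pos a haI).le _)
        (mul_nonneg hfx (pow_nonneg hgx _))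
    have w7 : (1:ℝ) * C = f a ^ (p+2) * (f a * g a ^ (p+2) * h a ^ (p+1)) := by
      rw [hC_def]; ring
    have w8 : f a ^ (p+2) * (f a * g a ^ (p+2) * h a ^ (p+1)) ≤
        f a ^ (p+2) * (f x * g x ^ (p+2) * h x ^ (p+1)) :=
      mul_le_mul_of_nonneg_left w6 (pow_nonneg (hfnn a haI) _)
    linarith
  -- conclude
  have hΦab : Φ a ≤ Φ b := hΦm haI ⟨hab.le, le_rfl⟩ hab.le
  have hΦa : Φ a = 0 := by
    simp only [hΦ_def, hF0, hG0, sub_self, zero_mul, zero_pow (by omega : p + 2 ≠ 0),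
      sub_zero, zero_sub, neg_zero]
  have hΦb : (0:ℝ) ≤ Φ b := hΦa ▸ hΦab
  simp only [hΦ_def] at hΦb
  have hFb : (∫ x in a..b, f x * g x * h x) = F b := rfl
  have hGb : (∫ x in a..b, f x ^ (p+2+1) * g x ^ (p+2) * h x ^ (p+2-1)) = G b := rfl
  rw [hFb, hGb]
  have eC : (b - a) * C = (b - a) * f a ^ (p+3) * g a ^ (p+2) * h a ^ (p+1) := by
    rw [hC_def]; ring
  have egoal : (b - a) * f a ^ (p+2+1) * g a ^ (p+2) * h a ^ (p+2-1)
      = (b - a) * f a ^ (p+3) * g a ^ (p+2) * h a ^ (p+1) := rfl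
  rw [egoal]
  linarith

theorem stmt19 (a b : ℝ) (hab : a < b) (n k : ℕ) (hn : 2 ≤ n)
    (hk1 : 1 ≤ k) (hk2 : k ≤ n - 1)
    (f : ℝ → ℝ)
    (hf_diff : ∀ i < k,
      DifferentiableOn ℝ (iteratedDerivWithin i f (Set.Icc a b)) (Set.Icc a b))
    (hf_nonneg : ∀ i ≤ k - 1, ∀ x ∈ Set.Icc a b,
      0 ≤ iteratedDerivWithin i f (Set.Icc a b) x)
    (g : ℝ → ℝ) (hg_cont : ContinuousOn g (Set.Icc a b))
    (hg_mono : MonotoneOn g (Set.Icc a b))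
    (hg_nonneg : ∀ x ∈ Set.Icc a b, 0 ≤ g x)
    (h : ℝ → ℝ) (hD : DPlus a b h ∨ DMinus a b h)
    (hh_mono : MonotoneOn h (Set.Icc a b))
    (hh_pos : ∀ x ∈ Set.Icc a b, 0 < h x)
    (hgrowth : ∀ x ∈ Set.Icc a b,
      (x - a) ^ (n - k - 1) * h x * ((n - 1).factorial : ℝ) / ((n - k - 1).factorial : ℝ) ≤
        iteratedDerivWithin k f (Set.Icc a b) x) :
    (b - a) * f a ^ (n + 1) * g a ^ n * h a ^ (n - 1) +
      (∫ x in a..b, f x * g x * h x) ^ n ≤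
    ∫ x in a..b, f x ^ (n + 1) * g x ^ n * h x ^ (n - 1) := by
  rcases hD with ⟨hc, hd⟩ | ⟨hc, hd⟩
  · exact main_aux a b hab n k hn hk1 hk2 f hf_diff hf_nonneg g hg_cont hg_mono hg_nonneg h
      (fun x => Set.Ioi x) (Or.inl fun _ => rfl) hc hd hh_mono hh_pos hgrowth
  · exact main_aux a b hab n k hn hk1 hk2 f hf_diff hf_nonneg g hg_cont hg_mono hg_nonneg h
      (fun x => Set.Iio x) (Or.inr fun _ => rfl) hc hd hh_mono hh_pos hgrowth
end
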